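/- arXiv:0812.0802 — 5 statements merged into one kernel-verified Lean document; each statement's English description precedes it below -/
import Mathlib

section
/- Let σ be a pointed rational polyhedral cone in N_ℚ = ℚ^n with dual cone σ^∨ ⊆ M_ℚ, let ρ be an extremal ray of σ generated by a primitive lattice vector ν, let τ = σ^∨ ∩ ρ^⊥ be the dual facet, and let σ₁ be the cone spanned by all extremal rays of σ other than ρ. Define S_ρ = σ₁^∨ ∩ (H − μ) ∩ M, where H = {m : ⟨m, ν⟩ = 0} and μ ∈ M satisfies ⟨μ, ν⟩ = 1. Then a lattice vector e ∈ M lies in S_ρ if and only if (i) e ∉ σ^∨ ∩ M and (ii) m + e ∈ σ^∨ ∩ M for every m ∈ (σ^∨ ∩ M) \ (τ ∩ M). -/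
open scoped BigOperators Pointwise

noncomputable section

/-- Rational `n`-space `N_ℚ ≅ M_ℚ ≅ ℚⁿ`. -/
abbrev Vec (n : ℕ) := Fin n → ℚ

/-- The natural pairing `M_ℚ × N_ℚ → ℚ`. -/
def pairQ {n : ℕ} (m p : Vec n) : ℚ := ∑ i, m i * p i

/-- The dual cone of a subset of `N_ℚ`. -/
def dualCone {n : ℕ} (σ : Set (Vec n)) : Set (Vec n) :=
  {m | ∀ p ∈ σ, 0 ≤ pairQ m p}

/-- Inclusion of the lattice `M = ℤⁿ` into `M_ℚ`. -/
def toQ {n : ℕ} (v : Fin n → ℤ) : Vec n := fun i => (v i : ℚ)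

/-- A vector of `ℚⁿ` is a lattice vector if all its coordinates are integers. -/
def IsLatticeVec {n : ℕ} (v : Vec n) : Prop := ∀ i, ∃ z : ℤ, v i = (z : ℚ)

/-- The convex cone generated by a set: all finite nonnegative rational combinations. -/
def coneHull {n : ℕ} (S : Set (Vec n)) : Set (Vec n) :=
  {x | ∃ (G : Finset (Vec n)) (c : Vec n → ℚ), ↑G ⊆ S ∧ (∀ g, 0 ≤ c g) ∧
    x = ∑ g ∈ G, c g • g}

/-- A rational polyhedral cone: the cone generated by finitely many lattice vectors. -/
def IsRatPolyCone {n : ℕ} (σ : Set (Vec n)) : Prop :=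
  ∃ G : Finset (Vec n), (∀ g ∈ G, IsLatticeVec g) ∧ σ = coneHull ↑G

/-- A cone is pointed if it contains no line through the origin. -/
def PointedCone' {n : ℕ} (σ : Set (Vec n)) : Prop := σ ∩ (-σ) ⊆ {0}

/-- A cone is of full dimension if it spans the ambient space. -/
def FullDim {n : ℕ} (σ : Set (Vec n)) : Prop := Submodule.span ℚ σ = ⊤

/-- `ρ` is the extremal ray of `σ` generated by the primitive lattice vector `ν`. -/
def IsExtremalRay {n : ℕ} (σ ρ : Set (Vec n)) (ν : Vec n) : Prop :=
  IsLatticeVec ν ∧ ν ≠ 0 ∧ (∀ c : ℚ, 0 < c → IsLatticeVec (c • ν) → 1 ≤ c) ∧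
  ρ = {x | ∃ c : ℚ, 0 ≤ c ∧ x = c • ν} ∧ ρ ⊆ σ ∧
  (∀ x ∈ σ, ∀ y ∈ σ, x + y ∈ ρ → x ∈ ρ)

/-- The submonoid `σ^∨ ∩ M` of lattice points of the dual cone. -/
def latticeCone {n : ℕ} (σ : Set (Vec n)) : AddSubmonoid (Fin n → ℤ) where
  carrier := {m | toQ m ∈ dualCone σ}
  zero_mem' := by
    intro p hp
    simp [pairQ, toQ]
  add_mem' := by
    intro a b ha hb p hp
    have h : pairQ (toQ (a + b)) p = pairQ (toQ a) p + pairQ (toQ b) p := by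
      simp [pairQ, toQ, add_mul, Finset.sum_add_distrib]
    rw [h]
    exact add_nonneg (ha p hp) (hb p hp)

/-- A derivation is locally nilpotent if every element is annihilated by some iterate. -/
def IsLND {R A : Type*} [CommRing R] [CommRing A] [Algebra R A]
    (D : Derivation R A A) : Prop :=
  ∀ a : A, ∃ k : ℕ, (⇑D)^[k] a = 0


namespace Stmt5Aux

variable {n : ℕ}

/-! ### Basic `pairQ` API -/

lemma pairQ_add_left (a b p : Vec n) : pairQ (a + b) p = pairQ a p + pairQ b p := by
  simp [pairQ, add_mul, Finset.sum_add_distrib]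

lemma pairQ_smul_left (c : ℚ) (a p : Vec n) : pairQ (c • a) p = c * pairQ a p := by
  simp [pairQ, Finset.mul_sum, mul_assoc]

lemma pairQ_comm (a b : Vec n) : pairQ a b = pairQ b a := by
  simp [pairQ, mul_comm]

lemma pairQ_add_right (a b p : Vec n) : pairQ p (a + b) = pairQ p a + pairQ p b := by
  rw [pairQ_comm, pairQ_add_left, pairQ_comm a, pairQ_comm b]

lemma pairQ_smul_right (c : ℚ) (a p : Vec n) : pairQ p (c • a) = c * pairQ p a := by
  rw [pairQ_comm, pairQ_smul_left, pairQ_comm]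

lemma pairQ_neg_left (a p : Vec n) : pairQ (-a) p = -pairQ a p := by
  simp [pairQ, Finset.sum_neg_distrib]

lemma pairQ_neg_right (a p : Vec n) : pairQ p (-a) = -pairQ p a := by
  rw [pairQ_comm, pairQ_neg_left, pairQ_comm]

lemma pairQ_sub_left (a b p : Vec n) : pairQ (a - b) p = pairQ a p - pairQ b p := by
  rw [sub_eq_add_neg, pairQ_add_left, pairQ_neg_left]; ring

lemma pairQ_sub_right (a b p : Vec n) : pairQ p (a - b) = pairQ p a - pairQ p b := by
  rw [pairQ_comm, pairQ_sub_left, pairQ_comm a, pairQ_comm b]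

lemma pairQ_zero_left (p : Vec n) : pairQ 0 p = 0 := by simp [pairQ]

lemma pairQ_zero_right (p : Vec n) : pairQ p 0 = 0 := by simp [pairQ]

lemma pairQ_sum_left {ι : Type*} (F : Finset ι) (f : ι → Vec n) (p : Vec n) :
    pairQ (∑ i ∈ F, f i) p = ∑ i ∈ F, pairQ (f i) p := by
  classical
  induction F using Finset.induction with
  | empty => simp [pairQ_zero_left]
  | insert _ _ hx ih =>
      rw [Finset.sum_insert hx, pairQ_add_left, ih, Finset.sum_insert hx]

lemma pairQ_sum_right {ι : Type*} (F : Finset ι) (f : ι → Vec n) (p : Vec n) :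
    pairQ p (∑ i ∈ F, f i) = ∑ i ∈ F, pairQ p (f i) := by
  rw [pairQ_comm, pairQ_sum_left]
  exact Finset.sum_congr rfl fun i _ => pairQ_comm _ _

lemma pairQ_self_nonneg (a : Vec n) : 0 ≤ pairQ a a :=
  Finset.sum_nonneg fun i _ => mul_self_nonneg _

lemma eq_zero_of_pairQ_self (a : Vec n) (h : pairQ a a ≤ 0) : a = 0 := by
  have h0 : ∀ i ∈ Finset.univ, (0:ℚ) ≤ a i * a i := fun i _ => mul_self_nonneg _
  have := (Finset.sum_eq_zero_iff_of_nonneg h0).1 (le_antisymm h (pairQ_self_nonneg a))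
  funext i
  have := this i (Finset.mem_univ i)
  exact mul_self_eq_zero.mp this

/-! ### `coneHull` API -/

lemma mem_coneHull_iff (G : Finset (Vec n)) (x : Vec n) :
    x ∈ coneHull (↑G : Set (Vec n)) ↔
      ∃ c : Vec n → ℚ, (∀ g, 0 ≤ c g) ∧ x = ∑ g ∈ G, c g • g := by
  classical
  constructor
  · rintro ⟨G', c, hG', hc, rfl⟩
    have hsub : G' ⊆ G := fun g hg => by exact_mod_cast hG' (by exact_mod_cast hg)
    refine ⟨fun g => if g ∈ G' then c g else 0, fun g => ?_, ?_⟩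
    · dsimp only; split
      · exact hc g
      · exact le_refl 0
    · dsimp only
      rw [(Finset.sum_subset hsub (fun g _ hg => by simp [hg])).symm]
      exact Finset.sum_congr rfl fun g hg => by simp [hg]
  · rintro ⟨c, hc, rfl⟩
    exact ⟨G, c, le_refl _, hc, rfl⟩

lemma subset_coneHull (S : Set (Vec n)) : S ⊆ coneHull S := by
  intro g hg
  refine ⟨{g}, fun h => if h = g then 1 else 0, by simpa, fun h => by positivity, ?_⟩
  simp

lemma coneHull_mono {S T : Set (Vec n)} (h : S ⊆ T) : coneHull S ⊆ coneHull T := by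
  rintro x ⟨G, c, hG, hc, rfl⟩
  exact ⟨G, c, hG.trans h, hc, rfl⟩

lemma zero_mem_coneHull (S : Set (Vec n)) : (0 : Vec n) ∈ coneHull S :=
  ⟨∅, 0, by simp, fun g => le_refl _, by simp⟩

lemma add_mem_coneHull {S : Set (Vec n)} {x y : Vec n}
    (hx : x ∈ coneHull S) (hy : y ∈ coneHull S) : x + y ∈ coneHull S := by
  classical
  obtain ⟨G1, c1, hG1, hc1, rfl⟩ := hx
  obtain ⟨G2, c2, hG2, hc2, rfl⟩ := hy
  refine ⟨G1 ∪ G2,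
    (fun g => (if g ∈ G1 then c1 g else 0) + (if g ∈ G2 then c2 g else 0)), ?_, ?_, ?_⟩
  · push_cast
    exact Set.union_subset hG1 hG2
  · intro g; dsimp only
    have h1 : (0:ℚ) ≤ (if g ∈ G1 then c1 g else 0) := by split; exacts [hc1 g, le_refl 0]
    have h2 : (0:ℚ) ≤ (if g ∈ G2 then c2 g else 0) := by split; exacts [hc2 g, le_refl 0]
    linarith
  · dsimp only
    rw [Finset.sum_congr rfl (fun g _ => add_smul _ _ g), Finset.sum_add_distrib]
    congr 1
    · rw [(Finset.sum_subset (Finset.subset_union_left (s₂ := G2))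
        (fun g _ hg => by simp [hg])).symm]
      exact Finset.sum_congr rfl fun g hg => by simp [hg]
    · rw [(Finset.sum_subset (Finset.subset_union_right (s₁ := G1))
        (fun g _ hg => by simp [hg])).symm]
      exact Finset.sum_congr rfl fun g hg => by simp [hg]

lemma smul_mem_coneHull {S : Set (Vec n)} {x : Vec n} {t : ℚ}
    (ht : 0 ≤ t) (hx : x ∈ coneHull S) : t • x ∈ coneHull S := by
  obtain ⟨G, c, hG, hc, rfl⟩ := hx
  refine ⟨G, fun g => t * c g, hG, fun g => mul_nonneg ht (hc g), ?_⟩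
  rw [Finset.smul_sum]
  exact Finset.sum_congr rfl fun g _ => by dsimp only; rw [smul_smul]

lemma sum_mem_coneHull {S : Set (Vec n)} {ι : Type*} (F : Finset ι) (f : ι → Vec n)
    (h : ∀ i ∈ F, f i ∈ coneHull S) : (∑ i ∈ F, f i) ∈ coneHull S := by
  classical
  induction F using Finset.induction with
  | empty => simpa using zero_mem_coneHull S
  | insert _ _ hx ih =>
      rw [Finset.sum_insert hx]
      exact add_mem_coneHull (h _ (Finset.mem_insert_self _ _))
        (ih fun i hi => h i (Finset.mem_insert_of_mem hi))

lemma coneHull_subset {S T : Set (Vec n)} (h : S ⊆ coneHull T) :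
    coneHull S ⊆ coneHull T := by
  rintro x ⟨G, c, hG, hc, rfl⟩
  exact sum_mem_coneHull _ _ fun g hg => smul_mem_coneHull (hc g) (h (hG hg))

lemma mem_dualCone_coneHull_iff (S : Set (Vec n)) (m : Vec n) :
    m ∈ dualCone (coneHull S) ↔ ∀ p ∈ S, 0 ≤ pairQ m p := by
  constructor
  · intro h p hp; exact h p (subset_coneHull S hp)
  · rintro h x ⟨G, c, hG, hc, rfl⟩
    rw [pairQ_sum_right]
    exact Finset.sum_nonneg fun g hg => by
      rw [pairQ_smul_right]
      exact mul_nonneg (hc g) (h g (hG hg))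

/-! ### Farkas lemma -/

lemma farkas : ∀ (k : ℕ) (a : Fin k → Vec n) (b : Vec n),
    (∀ y : Vec n, (∀ i, 0 ≤ pairQ y (a i)) → 0 ≤ pairQ y b) →
    ∃ c : Fin k → ℚ, (∀ i, 0 ≤ c i) ∧ b = ∑ i, c i • a i := by
  intro k
  induction k with
  | zero =>
      intro a b h
      have hb : b = 0 := by
        refine eq_zero_of_pairQ_self b ?_
        have := h (-b) (fun i => i.elim0)
        rw [pairQ_neg_left] at this
        linarith
      exact ⟨fun i => 0, fun i => le_refl _, by simp [hb]⟩
  | succ k ih =>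
      intro a b h
      by_cases hcase : ∀ y : Vec n, (∀ i : Fin k, 0 ≤ pairQ y (a i.castSucc)) → 0 ≤ pairQ y b
      · obtain ⟨c, hc, hb⟩ := ih (fun i => a i.castSucc) b hcase
        refine ⟨Fin.snoc c 0, ?_, ?_⟩
        · intro i
          induction i using Fin.lastCases with
          | last => simp
          | cast i => simpa using hc i
        · rw [Fin.sum_univ_castSucc, hb]
          simp [Fin.snoc]
      · push_neg at hcase
        obtain ⟨yh, hyh, hyb⟩ := hcase
        set α : ℚ := pairQ yh (a (Fin.last k)) with hα
        have hαneg : α < 0 := by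
          by_contra hge
          push_neg at hge
          refine absurd (h yh ?_) (by linarith)
          intro i
          induction i using Fin.lastCases with
          | last => exact hge
          | cast i => exact hyh i
        have hαne : α ≠ 0 := ne_of_lt hαneg
        set A : Fin k → Vec n :=
          fun i => a i.castSucc - (pairQ yh (a i.castSucc) / α) • a (Fin.last k) with hA
        set B : Vec n := b - (pairQ yh b / α) • a (Fin.last k) with hB
        have hyp : ∀ y : Vec n, (∀ i, 0 ≤ pairQ y (A i)) → 0 ≤ pairQ y B := by
          intro y hy
          set y' : Vec n := y - (pairQ y (a (Fin.last k)) / α) • yh with hy'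
          have key : ∀ v : Vec n, pairQ y' v =
              pairQ y v - (pairQ y (a (Fin.last k)) / α) * pairQ yh v := by
            intro v
            rw [hy', pairQ_sub_left, pairQ_smul_left]
          have h1 : ∀ i : Fin (k+1), 0 ≤ pairQ y' (a i) := by
            intro i
            induction i using Fin.lastCases with
            | last =>
                rw [key]
                field_simp
                rw [← hα, sub_self, mul_zero, zero_div]
            | cast i =>
                have := hy i
                rw [hA, pairQ_sub_right, pairQ_smul_right] at this
                rw [key]
                have heq : pairQ y (a (Fin.last k)) / α * pairQ yh (a i.castSucc)
                    = pairQ yh (a i.castSucc) / α * pairQ y (a (Fin.last k)) := by ring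
                linarith [this, heq]
          have := h y' h1
          rw [key] at this
          rw [hB, pairQ_sub_right, pairQ_smul_right]
          have heq : pairQ y (a (Fin.last k)) / α * pairQ yh b
              = pairQ yh b / α * pairQ y (a (Fin.last k)) := by ring
          linarith [this, heq]
        obtain ⟨c, hc, hBeq⟩ := ih A B hyp
        set lam : ℚ := (pairQ yh b - ∑ i, c i * pairQ yh (a i.castSucc)) / α with hlam
        have hlampos : 0 ≤ lam := by
          have hnum : pairQ yh b - ∑ i, c i * pairQ yh (a i.castSucc) < 0 := by
            have : 0 ≤ ∑ i, c i * pairQ yh (a i.castSucc) :=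
              Finset.sum_nonneg fun i _ => mul_nonneg (hc i) (hyh i)
            linarith
          exact le_of_lt (div_pos_of_neg_of_neg hnum hαneg)
        refine ⟨Fin.snoc c lam, ?_, ?_⟩
        · intro i
          induction i using Fin.lastCases with
          | last => simpa using hlampos
          | cast i => simpa using hc i
        · rw [Fin.sum_univ_castSucc]
          have hsnoc1 : ∀ i : Fin k, (Fin.snoc c lam : Fin (k+1) → ℚ) i.castSucc • a i.castSucc
              = c i • a i.castSucc := by intro i; simp
          have hsnoc2 : (Fin.snoc c lam : Fin (k+1) → ℚ) (Fin.last k) = lam := by simp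
          rw [Finset.sum_congr rfl (fun i _ => hsnoc1 i), hsnoc2]
          have e2 : (∑ i : Fin k, c i • A i)
              = ∑ i : Fin k, c i • a i.castSucc
                - ((∑ i : Fin k, c i * pairQ yh (a i.castSucc)) / α) • a (Fin.last k) := by
            rw [Finset.sum_congr rfl (fun (i : Fin k) _ => smul_sub (c i) _ _),
              Finset.sum_sub_distrib]
            congr 1
            have hterm : ∀ i : Fin k,
                c i • (pairQ yh (a i.castSucc) / α) • a (Fin.last k)
                  = (c i * pairQ yh (a i.castSucc) / α) • a (Fin.last k) := fun i => by
              rw [smul_smul, ← mul_div_assoc]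
            rw [Finset.sum_congr rfl (fun i _ => hterm i), ← Finset.sum_smul,
              ← Finset.sum_div]
          have e3 : lam • a (Fin.last k)
              = (pairQ yh b / α) • a (Fin.last k)
                - ((∑ i : Fin k, c i * pairQ yh (a i.castSucc)) / α) • a (Fin.last k) := by
            rw [← sub_smul, hlam, sub_div]
          have e1 : b = B + (pairQ yh b / α) • a (Fin.last k) := by rw [hB]; abel
          rw [e3]
          conv_lhs => rw [e1, hBeq, e2]
          abel
        
/-! ### Pointedness and minimal generating sets -/

lemma eq_zero_of_sum_eq_zero {T : Set (Vec n)} (hpt : PointedCone' (coneHull T))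
    {ι : Type*} (F : Finset ι) (f : ι → Vec n) (hf : ∀ i ∈ F, f i ∈ coneHull T)
    (hsum : ∑ i ∈ F, f i = 0) : ∀ i ∈ F, f i = 0 := by
  classical
  intro i hi
  have h1 : f i + ∑ j ∈ F.erase i, f j = 0 := by
    rw [Finset.add_sum_erase F f hi, hsum]
  have h2 : ∑ j ∈ F.erase i, f j ∈ coneHull T :=
    sum_mem_coneHull _ _ fun j hj => hf j (Finset.mem_of_mem_erase hj)
  have h3 : -(f i) = ∑ j ∈ F.erase i, f j := by
    rw [neg_eq_iff_add_eq_zero, add_comm] at *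
    exact h1
  have : f i ∈ coneHull T ∩ (-(coneHull T)) := ⟨hf i hi, by
    rw [Set.mem_neg, h3]; exact h2⟩
  exact hpt this

lemma exists_min_gen : ∀ (N : ℕ) (G : Finset (Vec n)), G.card ≤ N →
    ∃ G' : Finset (Vec n), G' ⊆ G ∧
      coneHull (↑G' : Set (Vec n)) = coneHull (↑G : Set (Vec n)) ∧
      ∀ g ∈ G', g ∉ coneHull (↑(G'.erase g) : Set (Vec n)) := by
  classical
  intro N
  induction N with
  | zero =>
      intro G hG
      have : G = ∅ := Finset.card_eq_zero.mp (Nat.le_zero.mp hG)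
      exact ⟨G, le_refl _, rfl, by simp [this]⟩
  | succ N ih =>
      intro G hG
      by_cases hall : ∀ g ∈ G, g ∉ coneHull ↑(G.erase g)
      · exact ⟨G, le_refl _, rfl, hall⟩
      · push_neg at hall
        obtain ⟨g₀, hg₀, hmem⟩ := hall
        have heq : coneHull ↑(G.erase g₀) = coneHull (↑G : Set (Vec n)) := by
          apply le_antisymm
          · exact coneHull_mono (Finset.coe_subset.mpr (Finset.erase_subset g₀ G))
          · apply coneHull_subset
            intro g hg
            rcases eq_or_ne g g₀ with rfl | hne
            · exact hmem
            · exact subset_coneHull _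
                (Finset.mem_coe.mpr (Finset.mem_erase.mpr ⟨hne, Finset.mem_coe.mp hg⟩))
        have hcard : (G.erase g₀).card ≤ N := by
          have := Finset.card_erase_of_mem hg₀
          omega
        obtain ⟨G', hsub, hceq, hmin⟩ := ih (G.erase g₀) hcard
        exact ⟨G', hsub.trans (Finset.erase_subset g₀ G), hceq.trans heq, hmin⟩

lemma min_gen_ne_zero {G' : Finset (Vec n)}
    (hmin : ∀ g ∈ G', g ∉ coneHull (↑(G'.erase g) : Set (Vec n))) {g : Vec n}
    (hg : g ∈ G') : g ≠ 0 := by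
  intro h
  exact hmin g hg (h ▸ zero_mem_coneHull _)

/-! ### Extremality of irredundant generators -/

lemma extremal_of_min {G' : Finset (Vec n)}
    (hpt : PointedCone' (coneHull (↑G' : Set (Vec n))))
    (hmin : ∀ g ∈ G', g ∉ coneHull (↑(G'.erase g) : Set (Vec n))) {g : Vec n}
    (hg : g ∈ G') :
    ∀ x ∈ coneHull (↑G' : Set (Vec n)), ∀ y ∈ coneHull (↑G' : Set (Vec n)),
      (∃ c : ℚ, 0 ≤ c ∧ x + y = c • g) → ∃ c : ℚ, 0 ≤ c ∧ x = c • g := by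
  classical
  intro x hx y hy ⟨c, hc, hxy⟩
  obtain ⟨a, ha, hxa⟩ := (mem_coneHull_iff G' x).mp hx
  obtain ⟨b, hb, hyb⟩ := (mem_coneHull_iff G' y).mp hy
  set s : ℚ := a g + b g with hs
  have hsplit : (a g + b g) • g + ∑ h ∈ G'.erase g, (a h + b h) • h = c • g := by
    rw [Finset.add_sum_erase G' (fun h => (a h + b h) • h) hg]
    rw [Finset.sum_congr rfl (fun h _ => add_smul (a h) (b h) h), Finset.sum_add_distrib,
      ← hxa, ← hyb, hxy]
  rcases le_or_gt c s with hcs | hcs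
  · -- c ≤ s : pointedness kills the erase part
    have hzero : (s - c) • g + ∑ h ∈ G'.erase g, (a h + b h) • h = 0 := by
      rw [sub_smul, ← hsplit]; abel
    have hu : (s - c) • g ∈ coneHull (↑G' : Set (Vec n)) :=
      smul_mem_coneHull (by linarith) (subset_coneHull _ (Finset.mem_coe.mpr hg))
    have hv : ∑ h ∈ G'.erase g, (a h + b h) • h ∈ coneHull (↑G' : Set (Vec n)) :=
      sum_mem_coneHull _ _ fun h hh => smul_mem_coneHull
        (by have := ha h; have := hb h; linarith)
        (subset_coneHull _ (Finset.mem_coe.mpr (Finset.mem_of_mem_erase hh)))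
    have hvzero : ∑ h ∈ G'.erase g, (a h + b h) • h = 0 := by
      have hneg : -(∑ h ∈ G'.erase g, (a h + b h) • h) = (s - c) • g := by
        rw [neg_eq_iff_add_eq_zero, add_comm]; exact hzero
      have : ∑ h ∈ G'.erase g, (a h + b h) • h ∈
          coneHull (↑G' : Set (Vec n)) ∩ (-(coneHull ↑G')) :=
        ⟨hv, by rw [Set.mem_neg, hneg]; exact hu⟩
      exact hpt this
    have hterms : ∀ h ∈ G'.erase g, (a h + b h) • h = 0 :=
      eq_zero_of_sum_eq_zero hpt (G'.erase g) _
        (fun h hh => smul_mem_coneHull (by have := ha h; have := hb h; linarith)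
          (subset_coneHull _ (Finset.mem_coe.mpr (Finset.mem_of_mem_erase hh)))) hvzero
    have hah : ∀ h ∈ G'.erase g, a h • h = 0 := by
      intro h hh
      have h0 := hterms h hh
      rcases smul_eq_zero.mp h0 with h1 | h1
      · have hah : a h = 0 := by have := ha h; have := hb h; linarith
        rw [hah, zero_smul]
      · rw [h1, smul_zero]
    refine ⟨a g, ha g, ?_⟩
    rw [hxa, ← Finset.add_sum_erase G' (fun h => a h • h) hg,
      Finset.sum_eq_zero hah, add_zero]
  · -- c > s : g would be redundant
    exfalso
    have hsum : ∑ h ∈ G'.erase g, (a h + b h) • h = (c - s) • g := by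
      rw [sub_smul, ← hsplit]; abel
    have : g ∈ coneHull ↑(G'.erase g) := by
      have hmem : (c - s)⁻¹ • ((c - s) • g) ∈ coneHull ↑(G'.erase g) := by
        apply smul_mem_coneHull (inv_nonneg.mpr (by linarith))
        rw [← hsum]
        exact sum_mem_coneHull _ _ fun h hh => smul_mem_coneHull
          (by have := ha h; have := hb h; linarith)
          (subset_coneHull _ (Finset.mem_coe.mpr hh))
      rwa [inv_smul_smul₀ (by linarith : c - s ≠ 0)] at hmem
    exact hmin g hg this

/-! ### Primitive vectors -/

lemma latticeVec_toQ (w : Fin n → ℤ) : IsLatticeVec (toQ w) := fun i => ⟨w i, rfl⟩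

lemma exists_int_rep {v : Vec n} (hv : IsLatticeVec v) : ∃ w : Fin n → ℤ, v = toQ w := by
  classical
  exact ⟨fun i => Classical.choose (hv i), funext fun i => Classical.choose_spec (hv i)⟩

lemma pairQ_int (a : Fin n → ℤ) {v : Vec n} (hv : IsLatticeVec v) :
    ∃ z : ℤ, pairQ (toQ a) v = (z : ℚ) := by
  obtain ⟨w, rfl⟩ := exists_int_rep hv
  refine ⟨∑ i, a i * w i, ?_⟩
  simp [pairQ, toQ]

lemma exists_primitive {g : Vec n} (hlat : IsLatticeVec g) (hne : g ≠ 0) :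
    ∃ (gh : Vec n) (d : ℚ), IsLatticeVec gh ∧ gh ≠ 0 ∧
      (∀ c : ℚ, 0 < c → IsLatticeVec (c • gh) → 1 ≤ c) ∧ 0 < d ∧ g = d • gh := by
  classical
  obtain ⟨w, rfl⟩ := exists_int_rep hlat
  set d : ℕ := Finset.univ.gcd (fun i => (w i).natAbs) with hd
  have hdvd : ∀ i, (d : ℤ) ∣ w i := by
    intro i
    have h1 : d ∣ (w i).natAbs := Finset.gcd_dvd (Finset.mem_univ i)
    have h2 : ((d : ℤ)).natAbs ∣ (w i).natAbs := by simpa using h1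
    exact Int.natAbs_dvd_natAbs.mp h2
  have hdne : d ≠ 0 := by
    intro h0
    apply hne
    have : ∀ i, w i = 0 := by
      intro i
      have := Finset.gcd_eq_zero_iff.mp (hd ▸ h0) i (Finset.mem_univ i)
      exact Int.natAbs_eq_zero.mp this
    funext i; simp [toQ, this i]
  set u : Fin n → ℤ := fun i => w i / (d : ℤ) with hu
  have hwu : ∀ i, w i = (d : ℤ) * u i := fun i => (Int.mul_ediv_cancel' (hdvd i)).symm
  have hgcdu : Finset.univ.gcd (fun i => (u i).natAbs) = 1 := by
    have h0 : Finset.univ.gcd (fun i => (w i).natAbs) =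
        Finset.univ.gcd (fun i => d * (u i).natAbs) := by
      apply Finset.gcd_congr rfl
      intro i _
      rw [hwu i, Int.natAbs_mul]
      simp
    have h1 : Finset.univ.gcd (fun i => (w i).natAbs) =
        d * Finset.univ.gcd (fun i => (u i).natAbs) := by
      rw [h0]
      simpa using Finset.gcd_mul_left
        (s := (Finset.univ : Finset (Fin n))) (f := fun i => (u i).natAbs) (a := d)
    have h2 : d * 1 = d * Finset.univ.gcd (fun i => (u i).natAbs) := by
      rw [mul_one, ← h1]
    exact (Nat.eq_of_mul_eq_mul_left (Nat.pos_of_ne_zero hdne) h2).symm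
  have hune : toQ u ≠ 0 := by
    intro h0
    apply hne
    funext i
    have : (u i : ℚ) = 0 := congrFun h0 i
    have hui : u i = 0 := by exact_mod_cast this
    have : w i = 0 := by rw [hwu i, hui, mul_zero]
    simp [toQ, this]
  have hdpos : (0 : ℚ) < (d : ℚ) := by
    exact_mod_cast Nat.pos_of_ne_zero hdne
  refine ⟨toQ u, (d : ℚ), latticeVec_toQ u, hune, ?_, hdpos, ?_⟩
  · -- primitivity
    intro c hc hlc
    have hden : ∀ i, ((c.den : ℤ)) ∣ u i := by
      intro i
      obtain ⟨z, hz⟩ := hlc i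
      have hzq : c * (u i : ℚ) = (z : ℚ) := by
        simpa [toQ] using hz
      have hnum : c.num * u i = z * (c.den : ℤ) := by
        have hq : (c.num : ℚ) * (u i : ℚ) = (z : ℚ) * (c.den : ℚ) := by
          have hc' : (c : ℚ) = (c.num : ℚ) / (c.den : ℚ) := by
            exact_mod_cast (Rat.num_div_den c).symm
          rw [hc'] at hzq
          field_simp at hzq
          linarith [hzq]
        exact_mod_cast hq
      have hdvd' : (c.den : ℤ) ∣ c.num * u i := ⟨z, by linarith [hnum]⟩
      have hcop : IsCoprime (c.den : ℤ) c.num := by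
        rw [Int.isCoprime_iff_gcd_eq_one]
        have hcop' : Nat.Coprime c.den c.num.natAbs := Nat.coprime_comm.mp c.reduced
        simpa [Int.gcd] using hcop'.gcd_eq_one
      exact hcop.dvd_of_dvd_mul_left hdvd'
    have hden1 : c.den = 1 := by
      have : c.den ∣ Finset.univ.gcd (fun i => (u i).natAbs) := by
        apply Finset.dvd_gcd
        intro i _
        have := hden i
        have : ((c.den : ℤ)).natAbs ∣ (u i).natAbs := Int.natAbs_dvd_natAbs.mpr this
        simpa using this
      rw [hgcdu] at this
      exact Nat.dvd_one.mp this
    have hcint : c = (c.num : ℚ) := by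
      conv_lhs => rw [← Rat.num_div_den c]
      rw [hden1]
      simp
    have hnpos : 0 < c.num := Rat.num_pos.mpr hc
    rw [hcint]
    exact_mod_cast hnpos
  · -- g = d • gh
    funext i
    show (w i : ℚ) = (d : ℚ) * (u i : ℚ)
    rw [hwu i]
    push_cast
    ring

/-! ### Separation and exposedness -/

lemma sep_extra (G : Finset (Vec n)) (v b : Vec n)
    (h : ∀ y : Vec n, (∀ g ∈ G, 0 ≤ pairQ y g) → 0 ≤ pairQ y v → 0 ≤ pairQ y b) :
    ∃ (c : Vec n → ℚ) (t : ℚ), (∀ g, 0 ≤ c g) ∧ 0 ≤ t ∧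
      b = ∑ g ∈ G, c g • g + t • v := by
  classical
  set k := G.card with hk
  set E := G.equivFin with hE
  set a : Fin (k + 1) → Vec n :=
    Fin.snoc (fun i => ((E.symm i : {x // x ∈ G}) : Vec n)) v with ha
  obtain ⟨c', hc', hb⟩ := farkas (k + 1) a b (by
    intro y hy
    have hv : 0 ≤ pairQ y v := by
      have := hy (Fin.last k)
      simpa [ha] using this
    refine h y ?_ hv
    intro g hg
    have := hy ((E ⟨g, hg⟩).castSucc)
    simpa [ha] using this)
  refine ⟨fun g => if hg : g ∈ G then c' ((E ⟨g, hg⟩).castSucc) else 0,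
    c' (Fin.last k), fun g => ?_, hc' _, ?_⟩
  · dsimp only; split
    · exact hc' _
    · exact le_refl 0
  · rw [hb, Fin.sum_univ_castSucc]
    congr 1
    · have h1 : ∑ i : Fin k, c' i.castSucc • a i.castSucc
          = ∑ x : {g // g ∈ G},
              (fun x : {g // g ∈ G} =>
                (if hg : (x : Vec n) ∈ G then c' ((E ⟨(x : Vec n), hg⟩).castSucc) else 0)
                  • (x : Vec n)) x := by
        rw [← Equiv.sum_comp E.symm]
        apply Finset.sum_congr rfl
        intro i _
        simp [ha]
      rw [h1, Finset.univ_eq_attach, Finset.sum_attach G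
        (fun g => (if hg : g ∈ G then c' ((E ⟨g, hg⟩).castSucc) else 0) • g)]
    · simp [ha]

lemma expose {G : Finset (Vec n)} {σ ρ' : Set (Vec n)} {ν' : Vec n}
    (hσG : σ = coneHull (↑G : Set (Vec n))) (hρ' : IsExtremalRay σ ρ' ν') :
    ∃ m : Vec n, (∀ x ∈ σ, 0 ≤ pairQ m x) ∧ pairQ m ν' = 0 ∧
      (∀ x ∈ σ, pairQ m x = 0 → x ∈ ρ') := by
  classical
  obtain ⟨-, hν'0, -, hρ'eq, hρ'sub, hρ'ext⟩ := hρ'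
  have hν'σ : ν' ∈ σ := hρ'sub (by rw [hρ'eq]; exact ⟨1, by norm_num, (one_smul ℚ ν').symm⟩)
  have claim : ∀ g ∈ G, g ∉ ρ' → ∃ m : Vec n,
      (∀ h ∈ G, 0 ≤ pairQ m h) ∧ pairQ m ν' = 0 ∧ 0 < pairQ m g := by
    intro g hgG hgρ'
    by_contra hno
    push_neg at hno
    obtain ⟨c, t, hc, ht, heq⟩ := sep_extra G (-ν') (-g) (by
      intro y hyG hyν'
      rw [pairQ_neg_right] at hyν'
      have hyν'2 : 0 ≤ pairQ y ν' := by
        have : ν' ∈ coneHull (↑G : Set (Vec n)) := hσG ▸ hν'σ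
        exact ((mem_dualCone_coneHull_iff (↑G : Set (Vec n)) y).mpr hyG) ν' this
      have hyν'0 : pairQ y ν' = 0 := le_antisymm (by linarith) hyν'2
      have := hno y hyG hyν'0
      rw [pairQ_neg_right]
      linarith)
    rw [smul_neg] at heq
    have h3 : -g + t • ν' = ∑ h ∈ G, c h • h := by
      rw [← sub_eq_add_neg] at heq
      rw [eq_sub_iff_add_eq] at heq
      exact heq
    have h2 : g + ∑ h ∈ G, c h • h = t • ν' := by
      rw [← h3]; abel
    have hgσ : g ∈ σ := hσG ▸ subset_coneHull _ (Finset.mem_coe.mpr hgG)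
    have hSσ : (∑ h ∈ G, c h • h) ∈ σ := by
      rw [hσG]
      exact sum_mem_coneHull _ _ fun h hh =>
        smul_mem_coneHull (hc h) (subset_coneHull _ (Finset.mem_coe.mpr hh))
    have : g ∈ ρ' := hρ'ext g hgσ _ hSσ (by
      rw [h2, hρ'eq]
      exact ⟨t, ht, rfl⟩)
    exact hgρ' this
  set F := G.filter (fun g => g ∉ ρ') with hF
  have hchoice : ∀ g : Vec n, g ∈ F → ∃ m : Vec n,
      (∀ h ∈ G, 0 ≤ pairQ m h) ∧ pairQ m ν' = 0 ∧ 0 < pairQ m g := by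
    intro g hg
    have := Finset.mem_filter.mp hg
    exact claim g this.1 this.2
  choose mg hmg1 hmg2 hmg3 using hchoice
  set m : Vec n := ∑ g ∈ F.attach, mg g g.2 with hm
  have hmG : ∀ h ∈ G, 0 ≤ pairQ m h := by
    intro h hh
    rw [hm, pairQ_sum_left]
    exact Finset.sum_nonneg fun g _ => hmg1 g g.2 h hh
  have hmν' : pairQ m ν' = 0 := by
    rw [hm, pairQ_sum_left]
    exact Finset.sum_eq_zero fun g _ => hmg2 g g.2
  have hmpos : ∀ h ∈ F, 0 < pairQ m h := by
    intro h hh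
    rw [hm, pairQ_sum_left]
    exact Finset.sum_pos' (fun g _ => hmg1 g g.2 h (Finset.mem_filter.mp hh).1)
      ⟨⟨h, hh⟩, Finset.mem_attach _ _, hmg3 h hh⟩
  refine ⟨m, ?_, hmν', ?_⟩
  · intro x hx
    rw [hσG] at hx
    exact (mem_dualCone_coneHull_iff _ m).mpr hmG x hx
  · intro x hx hx0
    rw [hσG] at hx
    obtain ⟨cc, hcc, hxc⟩ := (mem_coneHull_iff G x).mp hx
    have hterm : ∀ h ∈ G, cc h * pairQ m h = 0 := by
      have hsum : ∑ h ∈ G, cc h * pairQ m h = 0 := by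
        rw [← hx0, hxc, pairQ_sum_right]
        exact Finset.sum_congr rfl fun h _ => (pairQ_smul_right _ _ _).symm
      intro h hh
      exact (Finset.sum_eq_zero_iff_of_nonneg
        (fun h hh2 => mul_nonneg (hcc h) (hmG h hh2))).mp hsum h hh
    have hcz : ∀ h ∈ G, h ∉ ρ' → cc h = 0 := by
      intro h hh hhρ'
      have := hterm h hh
      have hpos := hmpos h (Finset.mem_filter.mpr ⟨hh, hhρ'⟩)
      rcases mul_eq_zero.mp this with h1 | h1
      · exact h1
      · exact absurd h1 (ne_of_gt hpos)
    have hdecomp : ∀ h ∈ G, ∃ t : ℚ, 0 ≤ cc h * t ∧ cc h • h = (cc h * t) • ν' := by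
      intro h hh
      by_cases hhρ' : h ∈ ρ'
      · rw [hρ'eq] at hhρ'
        obtain ⟨t, ht, rfl⟩ := hhρ'
        exact ⟨t, mul_nonneg (hcc _) ht, by rw [smul_smul]⟩
      · have := hcz h hh hhρ'
        exact ⟨0, by simp [this], by simp [this]⟩
    choose tf htf1 htf2 using hdecomp
    rw [hρ'eq]
    refine ⟨∑ h ∈ G.attach, cc h.1 * tf h.1 h.2,
      Finset.sum_nonneg fun h _ => htf1 h.1 h.2, ?_⟩
    rw [hxc, ← Finset.sum_attach G (fun h => cc h • h)]
    rw [Finset.sum_congr rfl (fun h _ => htf2 h.1 h.2), ← Finset.sum_smul]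

/-! ### Numeric helpers -/

lemma exists_nat_bound {ι : Type*} (F : Finset ι) (f g : ι → ℚ) :
    (∀ i ∈ F, 0 < g i) → ∃ k : ℕ, ∀ i ∈ F, 0 ≤ f i + (k : ℚ) * g i := by
  classical
  induction F using Finset.induction with
  | empty => exact fun _ => ⟨0, by simp⟩
  | @insert i F hi ih =>
      intro hg
      obtain ⟨k1, hk1⟩ := ih fun j hj => hg j (Finset.mem_insert_of_mem hj)
      obtain ⟨k2, hk2⟩ := exists_nat_ge (-(f i) / g i)
      refine ⟨max k1 k2, ?_⟩
      intro j hj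
      rcases Finset.mem_insert.mp hj with rfl | hj'
      · have hgi := hg j (Finset.mem_insert_self _ _)
        have hle : -(f j) / g j ≤ ((max k1 k2 : ℕ) : ℚ) :=
          le_trans hk2 (by exact_mod_cast Nat.le_max_right k1 k2)
        have := (div_le_iff₀ hgi).mp hle
        linarith
      · have h1 := hk1 j hj'
        have hmono : ((k1 : ℕ) : ℚ) ≤ ((max k1 k2 : ℕ) : ℚ) := by
          exact_mod_cast Nat.le_max_left k1 k2
        have hgj := le_of_lt (hg j (Finset.mem_insert_of_mem hj'))
        nlinarith [mul_le_mul_of_nonneg_right hmono hgj]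

lemma exists_lattice_scale (m : Vec n) :
    ∃ (N : ℕ) (w : Fin n → ℤ), 0 < N ∧ toQ w = (N : ℚ) • m := by
  classical
  set N := ∏ i, (m i).den with hN
  have hNpos : 0 < N := Finset.prod_pos fun i _ => (m i).pos
  have hint : ∀ i, ∃ z : ℤ, (z : ℚ) = (N : ℚ) * m i := by
    intro i
    obtain ⟨k, hk⟩ := Finset.dvd_prod_of_mem (fun i => (m i).den) (Finset.mem_univ i)
    refine ⟨(m i).num * (k : ℤ), ?_⟩
    have hden : ((m i).den : ℚ) ≠ 0 := by
      exact_mod_cast (m i).pos.ne'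
    have h := Rat.num_div_den (m i)
    rw [div_eq_iff hden] at h
    rw [hN, hk]
    push_cast
    rw [h]
    ring
  choose w hw using hint
  refine ⟨N, w, hNpos, funext fun i => ?_⟩
  simp only [toQ, Pi.smul_apply, smul_eq_mul]
  exact hw i

end Stmt5Aux

/-- Lemma 2.6 (convex-core): characterization of the set `S_ρ`.  Here `σ ⊆ N_ℚ` is a
pointed full-dimensional rational polyhedral cone, `ρ` the extremal ray generated by the
primitive lattice vector `ν`, `τ = σ^∨ ∩ ρ^⊥` the dual facet, `σ₁` the cone spanned by the
remaining extremal rays, `μ` a lattice vector with `⟨μ, ν⟩ = 1`, and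
`S_ρ = σ₁^∨ ∩ (H - μ) ∩ M` where `H = {m : ⟨m, ν⟩ = 0}`.  Then `e ∈ S_ρ` iff
`e ∉ σ^∨ ∩ M` and `m + e ∈ σ^∨ ∩ M` for all `m ∈ (σ^∨ ∩ M) \ (τ ∩ M)`. -/
theorem stmt5 {n : ℕ} (σ ρ σ₁ : Set (Vec n)) (ν : Vec n) (μ : Fin n → ℤ)
    (hσ : IsRatPolyCone σ) (hpt : PointedCone' σ) (hfull : FullDim σ)
    (hρ : IsExtremalRay σ ρ ν)
    (hμ : pairQ (toQ μ) ν = 1)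
    (hσ₁ : σ₁ = coneHull {x | ∃ (ρ' : Set (Vec n)) (ν' : Vec n),
      IsExtremalRay σ ρ' ν' ∧ ρ' ≠ ρ ∧ x ∈ ρ'})
    (e : Fin n → ℤ) :
    (toQ e ∈ dualCone σ₁ ∧ pairQ (toQ e + toQ μ) ν = 0) ↔
      (toQ e ∉ dualCone σ ∧
        ∀ m : Fin n → ℤ, toQ m ∈ dualCone σ → pairQ (toQ m) ν ≠ 0 →
          toQ (m + e) ∈ dualCone σ) := by
  classical
  obtain ⟨hνlat, hν0, hνprim, hρeq, hρsub, hρext⟩ := hρ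
  obtain ⟨G, hGlat, hσG⟩ := hσ
  obtain ⟨G', hG'sub, hG'eq, hG'min⟩ := Stmt5Aux.exists_min_gen G.card G (le_refl _)
  have hσG' : σ = coneHull (↑G' : Set (Vec n)) := by rw [hσG, ← hG'eq]
  have hνρ : ν ∈ ρ := by rw [hρeq]; exact ⟨1, by norm_num, (one_smul ℚ ν).symm⟩
  have hνσ : ν ∈ σ := hρsub hνρ
  set E : Set (Vec n) := {x | ∃ (ρ' : Set (Vec n)) (ν' : Vec n),
      IsExtremalRay σ ρ' ν' ∧ ρ' ≠ ρ ∧ x ∈ ρ'} with hE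
  -- every minimal generator is a multiple of ν or lies in another extremal ray
  have hgen : ∀ g ∈ G', (∃ t : ℚ, 0 ≤ t ∧ g = t • ν) ∨ g ∈ E := by
    intro g hg
    have hglat : IsLatticeVec g := hGlat g (hG'sub hg)
    have hgne : g ≠ 0 := Stmt5Aux.min_gen_ne_zero hG'min hg
    obtain ⟨gh, d, ghlat, ghne, ghprim, hdpos, hgd⟩ := Stmt5Aux.exists_primitive hglat hgne
    set ρg : Set (Vec n) := {x | ∃ c : ℚ, 0 ≤ c ∧ x = c • gh} with hρg
    have hghσ : gh ∈ σ := by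
      rw [hσG']
      have hgm : g ∈ coneHull (↑G' : Set (Vec n)) :=
        Stmt5Aux.subset_coneHull _ (Finset.mem_coe.mpr hg)
      have := Stmt5Aux.smul_mem_coneHull (inv_nonneg.mpr (le_of_lt hdpos)) hgm
      rwa [hgd, inv_smul_smul₀ (ne_of_gt hdpos)] at this
    have hray : IsExtremalRay σ ρg gh := by
      refine ⟨ghlat, ghne, ghprim, rfl, ?_, ?_⟩
      · rintro x ⟨c, hc, rfl⟩
        rw [hσG']
        exact Stmt5Aux.smul_mem_coneHull hc (hσG' ▸ hghσ)
      · intro x hx y hy hxy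
        rw [hσG'] at hx hy
        obtain ⟨c, hc, hxyeq⟩ := hxy
        obtain ⟨c', hc', hx'⟩ := Stmt5Aux.extremal_of_min (hσG' ▸ hpt) hG'min hg x hx y hy
          ⟨c / d, by positivity, by
            rw [hxyeq, hgd, smul_smul]
            congr 1
            field_simp⟩
        exact ⟨c' * d, by positivity, by rw [hx', hgd, smul_smul]⟩
    by_cases hcase : ρg = ρ
    · left
      have hgρ : g ∈ ρ := hcase ▸ ⟨d, le_of_lt hdpos, hgd⟩
      rw [hρeq] at hgρ
      exact hgρ
    · right
      exact ⟨ρg, gh, hray, hcase, d, le_of_lt hdpos, hgd⟩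
  -- Minkowski-type decomposition
  have hdec : ∀ x ∈ σ, ∃ (c : ℚ) (z : Vec n), 0 ≤ c ∧ z ∈ σ₁ ∧ x = c • ν + z := by
    intro x hx
    rw [hσG'] at hx
    obtain ⟨a, ha, hxa⟩ := (Stmt5Aux.mem_coneHull_iff G' x).mp hx
    have hsplit : ∀ h : Vec n, h ∈ G' → ∃ (c : ℚ) (z : Vec n), 0 ≤ c ∧ z ∈ σ₁ ∧
        h = c • ν + z := by
      intro h hh
      rcases hgen h hh with ⟨t, ht, hteq⟩ | hhE
      · exact ⟨t, 0, ht, by rw [hσ₁]; exact Stmt5Aux.zero_mem_coneHull _,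
          by rw [hteq, add_zero]⟩
      · exact ⟨0, h, le_refl 0, by rw [hσ₁]; exact Stmt5Aux.subset_coneHull _ hhE,
          by rw [zero_smul, zero_add]⟩
    choose cf zf hcf hzf heqf using hsplit
    refine ⟨∑ h ∈ G'.attach, a h.1 * cf h.1 h.2,
      ∑ h ∈ G'.attach, a h.1 • zf h.1 h.2,
      Finset.sum_nonneg fun h _ => mul_nonneg (ha h.1) (hcf h.1 h.2), ?_, ?_⟩
    · rw [hσ₁]
      exact Stmt5Aux.sum_mem_coneHull _ _ fun h _ =>
        Stmt5Aux.smul_mem_coneHull (ha h.1)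
          (by have := hzf h.1 h.2; rwa [hσ₁] at this)
    · rw [hxa, ← Finset.sum_attach G' (fun h => a h • h)]
      rw [Finset.sum_congr rfl (fun h _ =>
        show a h.1 • h.1 = (a h.1 * cf h.1 h.2) • ν + a h.1 • zf h.1 h.2 by
          calc a h.1 • h.1 = a h.1 • (cf h.1 h.2 • ν + zf h.1 h.2) := by
                rw [← heqf h.1 h.2]
            _ = (a h.1 * cf h.1 h.2) • ν + a h.1 • zf h.1 h.2 := by
                rw [smul_add, smul_smul])]
      rw [Finset.sum_add_distrib, ← Finset.sum_smul]
  have hσ₁σ : σ₁ ⊆ σ := by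
    rw [hσ₁, hσG']
    apply Stmt5Aux.coneHull_subset
    rintro x ⟨ρ', ν', hray', hne', hx⟩
    have : x ∈ σ := hray'.2.2.2.2.1 hx
    rwa [hσG'] at this
  -- a lattice functional positive on the other rays and vanishing on ν
  have hmstar : ∃ ms : Fin n → ℤ, toQ ms ∈ dualCone σ ∧ pairQ (toQ ms) ν = 1 := by
    obtain ⟨m1, hm1σ, hm1ν, hm1face⟩ :=
      Stmt5Aux.expose hσG' ⟨hνlat, hν0, hνprim, hρeq, hρsub, hρext⟩
    obtain ⟨N, w, hNpos, hw⟩ := Stmt5Aux.exists_lattice_scale m1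
    have hwpair : ∀ p : Vec n, pairQ (toQ w) p = (N : ℚ) * pairQ m1 p := by
      intro p
      rw [hw, Stmt5Aux.pairQ_smul_left]
    obtain ⟨k, hk⟩ := Stmt5Aux.exists_nat_bound
      (G'.filter (fun h => h ∉ ρ)) (fun h => pairQ (toQ μ) h) (fun h => pairQ (toQ w) h)
      (by
        intro h hh
        obtain ⟨hhG, hhρ⟩ := Finset.mem_filter.mp hh
        have hhσ : h ∈ σ := hσG' ▸ Stmt5Aux.subset_coneHull _ (Finset.mem_coe.mpr hhG)
        have h1 : 0 ≤ pairQ m1 h := hm1σ h hhσ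
        have h2 : pairQ m1 h ≠ 0 := fun h0 => hhρ (hm1face h hhσ h0)
        show (0:ℚ) < pairQ (toQ w) h
        rw [hwpair]
        have : (0:ℚ) < (N : ℚ) := by exact_mod_cast hNpos
        exact mul_pos this (lt_of_le_of_ne h1 (Ne.symm h2)))
    have htoQ : toQ (μ + k • w) = toQ μ + (k : ℚ) • toQ w := by
      funext i
      simp [toQ]
    refine ⟨μ + k • w, ?_, ?_⟩
    · rw [hσG']
      apply (Stmt5Aux.mem_dualCone_coneHull_iff _ _).mpr
      intro h hhG'
      have hhG : h ∈ G' := Finset.mem_coe.mp hhG'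
      rw [htoQ, Stmt5Aux.pairQ_add_left, Stmt5Aux.pairQ_smul_left]
      by_cases hhρ : h ∈ ρ
      · rw [hρeq] at hhρ
        obtain ⟨t, ht, rfl⟩ := hhρ
        rw [Stmt5Aux.pairQ_smul_right, Stmt5Aux.pairQ_smul_right, hμ, hwpair, hm1ν]
        nlinarith
      · have := hk h (Finset.mem_filter.mpr ⟨hhG, hhρ⟩)
        linarith
    · rw [htoQ, Stmt5Aux.pairQ_add_left, Stmt5Aux.pairQ_smul_left, hμ, hwpair, hm1ν]
      ring
  obtain ⟨ms, hmsσ, hmsν⟩ := hmstar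
  -- lattice functionals exposing the other extremal rays
  have hF4 : ∀ (ρ' : Set (Vec n)) (ν' : Vec n), IsExtremalRay σ ρ' ν' → ρ' ≠ ρ →
      ∃ m : Fin n → ℤ, toQ m ∈ dualCone σ ∧ pairQ (toQ m) ν' = 0 ∧
        pairQ (toQ m) ν ≠ 0 := by
    intro ρ' ν' hray' hne'
    obtain ⟨m1, hm1σ, hm1ν', hm1face⟩ := Stmt5Aux.expose hσG' hray'
    obtain ⟨N, w, hNpos, hw⟩ := Stmt5Aux.exists_lattice_scale m1
    have hwpair : ∀ p : Vec n, pairQ (toQ w) p = (N : ℚ) * pairQ m1 p := by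
      intro p
      rw [hw, Stmt5Aux.pairQ_smul_left]
    have hNQ : (0:ℚ) < (N : ℚ) := by exact_mod_cast hNpos
    refine ⟨w, ?_, ?_, ?_⟩
    · intro p hp
      rw [hwpair]
      exact mul_nonneg (le_of_lt hNQ) (hm1σ p hp)
    · rw [hwpair, hm1ν', mul_zero]
    · rw [hwpair]
      intro h0
      have hm1ν0 : pairQ m1 ν = 0 := by
        rcases mul_eq_zero.mp h0 with h1 | h1
        · exact absurd h1 (ne_of_gt hNQ)
        · exact h1
      have hνρ' : ν ∈ ρ' := hm1face ν hνσ hm1ν0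
      apply hne'
      obtain ⟨hν'lat, hν'0, hν'prim, hρ'eq, hρ'sub, hρ'ext⟩ := hray'
      rw [hρ'eq] at hνρ'
      obtain ⟨c, hc, hνc⟩ := hνρ'
      have hcne : c ≠ 0 := by
        intro h0c
        apply hν0
        rw [hνc, h0c, zero_smul]
      have hcpos : 0 < c := lt_of_le_of_ne hc (Ne.symm hcne)
      rw [hρ'eq, hρeq]
      ext x
      constructor
      · rintro ⟨t, ht, rfl⟩
        exact ⟨t / c, by positivity, by rw [hνc, smul_smul, div_mul_cancel₀ t hcne]⟩
      · rintro ⟨t, ht, rfl⟩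
        exact ⟨t * c, by positivity, by rw [hνc, smul_smul]⟩
  -- integrality of pairings with ν
  constructor
  · rintro ⟨he1, he2⟩
    have heν : pairQ (toQ e) ν = -1 := by
      rw [Stmt5Aux.pairQ_add_left, hμ] at he2
      linarith
    constructor
    · intro hmem
      have := hmem ν hνσ
      rw [heν] at this
      linarith
    · intro m hm hmν
      have hmν0 : 0 ≤ pairQ (toQ m) ν := hm ν hνσ
      obtain ⟨z, hz⟩ := Stmt5Aux.pairQ_int m hνlat
      have hz1 : 1 ≤ pairQ (toQ m) ν := by
        have hzpos : 0 < z := by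
          have h1 : (0:ℚ) < (z:ℚ) := by
            rw [← hz]
            exact lt_of_le_of_ne hmν0 (Ne.symm hmν)
          exact_mod_cast h1
        rw [hz]
        exact_mod_cast hzpos
      intro p hp
      obtain ⟨c, zz, hc, hzσ₁, rfl⟩ := hdec p hp
      have htoQ : toQ (m + e) = toQ m + toQ e := by
        funext i
        simp [toQ]
      have hexp : pairQ (toQ (m + e)) (c • ν + zz)
          = c * (pairQ (toQ m) ν + pairQ (toQ e) ν)
            + (pairQ (toQ m) zz + pairQ (toQ e) zz) := by
        rw [htoQ, Stmt5Aux.pairQ_add_right, Stmt5Aux.pairQ_smul_right,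
          Stmt5Aux.pairQ_add_left, Stmt5Aux.pairQ_add_left]
      have h1 : 0 ≤ pairQ (toQ m) zz := hm zz (hσ₁σ hzσ₁)
      have h2 : 0 ≤ pairQ (toQ e) zz := he1 zz hzσ₁
      rw [hexp, heν]
      have h3 : 0 ≤ pairQ (toQ m) ν + -1 := by linarith
      nlinarith
  · rintro ⟨hne, hall⟩
    have he1 : toQ e ∈ dualCone σ₁ := by
      rw [hσ₁]
      apply (Stmt5Aux.mem_dualCone_coneHull_iff _ _).mpr
      intro p hp
      obtain ⟨ρ', ν', hray', hρne, hpρ'⟩ := hp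
      obtain ⟨m, hmσ, hmν', hmν⟩ := hF4 ρ' ν' hray' hρne
      have hν'σ : ν' ∈ σ := hray'.2.2.2.2.1 (by
        rw [hray'.2.2.2.1]
        exact ⟨1, by norm_num, (one_smul ℚ ν').symm⟩)
      have hmem := hall m hmσ hmν
      have h0 : 0 ≤ pairQ (toQ (m + e)) ν' := hmem ν' hν'σ
      have htoQ : toQ (m + e) = toQ m + toQ e := by
        funext i
        simp [toQ]
      rw [htoQ, Stmt5Aux.pairQ_add_left, hmν'] at h0
      have heν' : 0 ≤ pairQ (toQ e) ν' := by linarith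
      have hpρ'2 := hpρ'
      rw [hray'.2.2.2.1] at hpρ'2
      obtain ⟨t, ht, rfl⟩ := hpρ'2
      rw [Stmt5Aux.pairQ_smul_right]
      exact mul_nonneg ht heν'
    have hge : -1 ≤ pairQ (toQ e) ν := by
      have hmem := hall ms hmsσ (by rw [hmsν]; exact one_ne_zero)
      have h0 : 0 ≤ pairQ (toQ (ms + e)) ν := hmem ν hνσ
      have htoQ : toQ (ms + e) = toQ ms + toQ e := by
        funext i
        simp [toQ]
      rw [htoQ, Stmt5Aux.pairQ_add_left, hmsν] at h0
      linarith
    have hlt : pairQ (toQ e) ν < 0 := by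
      by_contra hcon
      push_neg at hcon
      apply hne
      intro p hp
      obtain ⟨c, zz, hc, hzσ₁, rfl⟩ := hdec p hp
      have h2 : 0 ≤ pairQ (toQ e) zz := he1 zz hzσ₁
      rw [Stmt5Aux.pairQ_add_right, Stmt5Aux.pairQ_smul_right]
      nlinarith
    obtain ⟨z, hz⟩ := Stmt5Aux.pairQ_int e hνlat
    have hzval : z = -1 := by
      rw [hz] at hge hlt
      have h1 : (-1 : ℤ) ≤ z := by exact_mod_cast hge
      have h2 : z < 0 := by exact_mod_cast hlt
      omega
    refine ⟨he1, ?_⟩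
    rw [Stmt5Aux.pairQ_add_left, hμ, hz, hzval]
    norm_num
end
end

section
/- Let σ be a pointed full-dimensional rational polyhedral cone in N_ℚ, ρ an extremal ray of σ generated by a primitive lattice vector, and τ the facet of σ^∨ dual to ρ. Then the set S_ρ = {e ∈ M : e ∉ σ^∨ and m + e ∈ σ^∨ ∩ M for all m ∈ (σ^∨ ∩ M) \ (τ ∩ M)} is nonempty, and moreover if e ∈ S_ρ and m ∈ τ ∩ M, then e + m ∈ S_ρ. -/
open scoped BigOperators Pointwise

noncomputable section

section FarkasHelpers

variable {n : ℕ}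

lemma pairQ_add_left (a b p : Vec n) : pairQ (a + b) p = pairQ a p + pairQ b p := by
  simp [pairQ, add_mul, Finset.sum_add_distrib]

lemma pairQ_sub_left (a b p : Vec n) : pairQ (a - b) p = pairQ a p - pairQ b p := by
  simp [pairQ, sub_mul, Finset.sum_sub_distrib]

lemma pairQ_smul_left (c : ℚ) (a p : Vec n) : pairQ (c • a) p = c * pairQ a p := by
  simp [pairQ, Finset.mul_sum, mul_assoc]

lemma pairQ_neg_left (a p : Vec n) : pairQ (-a) p = -pairQ a p := by
  simp [pairQ]

lemma pairQ_add_right (p a b : Vec n) : pairQ p (a + b) = pairQ p a + pairQ p b := by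
  simp [pairQ, mul_add, Finset.sum_add_distrib]

lemma pairQ_sub_right (p a b : Vec n) : pairQ p (a - b) = pairQ p a - pairQ p b := by
  simp [pairQ, mul_sub, Finset.sum_sub_distrib]

lemma pairQ_smul_right (c : ℚ) (p a : Vec n) : pairQ p (c • a) = c * pairQ p a := by
  simp [pairQ, Finset.mul_sum, mul_left_comm]

lemma pairQ_neg_right (p a : Vec n) : pairQ p (-a) = -pairQ p a := by
  simp [pairQ]

lemma pairQ_zero_right (p : Vec n) : pairQ p 0 = 0 := by simp [pairQ]

lemma pairQ_sum_left {ι : Type*} (s : Finset ι) (f : ι → Vec n) (p : Vec n) :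
    pairQ (∑ i ∈ s, f i) p = ∑ i ∈ s, pairQ (f i) p := by
  simp only [pairQ, Finset.sum_apply, Finset.sum_mul]
  exact Finset.sum_comm

lemma pairQ_sum_right {ι : Type*} (s : Finset ι) (p : Vec n) (f : ι → Vec n) :
    pairQ p (∑ i ∈ s, f i) = ∑ i ∈ s, pairQ p (f i) := by
  simp only [pairQ, Finset.sum_apply, Finset.mul_sum]
  exact Finset.sum_comm

lemma pairQ_self_pos {w : Vec n} (hw : w ≠ 0) : 0 < pairQ w w := by
  obtain ⟨i, hi⟩ := Function.ne_iff.mp hw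
  refine Finset.sum_pos' (fun j _ => mul_self_nonneg _) ⟨i, Finset.mem_univ i, ?_⟩
  exact mul_self_pos.mpr hi

lemma zero_mem_coneHull (S : Set (Vec n)) : (0 : Vec n) ∈ coneHull S :=
  ⟨∅, fun _ => 0, by simp, fun _ => le_refl 0, by simp⟩

lemma subset_coneHull (S : Set (Vec n)) {x : Vec n} (hx : x ∈ S) : x ∈ coneHull S :=
  ⟨{x}, fun _ => 1, by simpa using hx, fun _ => zero_le_one, by simp⟩

lemma coneHull_smul {S : Set (Vec n)} {t : ℚ} (ht : 0 ≤ t) {x : Vec n}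
    (hx : x ∈ coneHull S) : t • x ∈ coneHull S := by
  obtain ⟨G, c, hG, hc, rfl⟩ := hx
  refine ⟨G, fun g => t * c g, hG, fun g => mul_nonneg ht (hc g), ?_⟩
  rw [Finset.smul_sum]
  exact Finset.sum_congr rfl fun g _ => smul_smul t (c g) g

lemma coneHull_add {S : Set (Vec n)} {x y : Vec n}
    (hx : x ∈ coneHull S) (hy : y ∈ coneHull S) : x + y ∈ coneHull S := by
  classical
  obtain ⟨G₁, c₁, hG₁, hc₁, rfl⟩ := hx
  obtain ⟨G₂, c₂, hG₂, hc₂, rfl⟩ := hy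
  refine ⟨G₁ ∪ G₂, fun g => (if g ∈ G₁ then c₁ g else 0) + (if g ∈ G₂ then c₂ g else 0),
    ?_, ?_, ?_⟩
  · rw [Finset.coe_union]
    exact Set.union_subset hG₁ hG₂
  · intro g
    have h1 : 0 ≤ (if g ∈ G₁ then c₁ g else 0) := by split <;> simp [hc₁ g]
    have h2 : 0 ≤ (if g ∈ G₂ then c₂ g else 0) := by split <;> simp [hc₂ g]
    exact add_nonneg h1 h2
  · have key : ∀ (G : Finset (Vec n)) (c : Vec n → ℚ), G ⊆ G₁ ∪ G₂ →
        ∑ g ∈ G₁ ∪ G₂, (if g ∈ G then c g else 0) • g = ∑ g ∈ G, c g • g := by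
      intro G c hG
      have : ∀ g ∈ G₁ ∪ G₂, (if g ∈ G then c g else 0) • g
          = (if g ∈ G then c g • g else 0) := by
        intro g _; split <;> simp
      rw [Finset.sum_congr rfl this, Finset.sum_ite_mem,
        Finset.inter_eq_right.mpr hG]
    have e1 := key G₁ c₁ Finset.subset_union_left
    have e2 := key G₂ c₂ Finset.subset_union_right
    rw [← e1, ← e2, ← Finset.sum_add_distrib]
    exact Finset.sum_congr rfl fun g _ => (add_smul _ _ g).symm

/-- Membership in the cone generated by a list of vectors, defined recursively. -/
def InCone : List (Vec n) → Vec n → Prop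
  | [], w => w = 0
  | v :: L, w => ∃ t : ℚ, 0 ≤ t ∧ InCone L (w - t • v)

lemma inCone_nil {w : Vec n} : InCone [] w ↔ w = 0 := Iff.rfl

lemma inCone_cons {v w : Vec n} {L : List (Vec n)} :
    InCone (v :: L) w ↔ ∃ t : ℚ, 0 ≤ t ∧ InCone L (w - t • v) := Iff.rfl

lemma inCone_pair_nonneg (x : Vec n) :
    ∀ {L : List (Vec n)} {w : Vec n}, InCone L w → (∀ v ∈ L, 0 ≤ pairQ x v) →
      0 ≤ pairQ x w := by
  intro L
  induction L with
  | nil =>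
    intro w h _
    rw [inCone_nil] at h
    rw [h, pairQ_zero_right]
  | cons v L ih =>
    intro w h hvs
    obtain ⟨t, ht, h'⟩ := inCone_cons.mp h
    have hrec := ih h' (fun u hu => hvs u (List.mem_cons_of_mem _ hu))
    rw [pairQ_sub_right, pairQ_smul_right] at hrec
    have hv := hvs v (List.mem_cons_self)
    nlinarith

lemma inCone_mem_coneHull {S : Set (Vec n)} :
    ∀ {L : List (Vec n)} {w : Vec n}, InCone L w → (∀ v ∈ L, v ∈ coneHull S) →
      w ∈ coneHull S := by
  intro L
  induction L with
  | nil =>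
    intro w h _
    rw [inCone_nil] at h
    rw [h]
    exact zero_mem_coneHull S
  | cons v L ih =>
    intro w h hvs
    obtain ⟨t, ht, h'⟩ := inCone_cons.mp h
    have h1 := ih h' (fun u hu => hvs u (List.mem_cons_of_mem _ hu))
    have h2 : t • v ∈ coneHull S := coneHull_smul ht (hvs v (List.mem_cons_self))
    have : w = (w - t • v) + t • v := by funext i; simp
    rw [this]
    exact coneHull_add h1 h2

/-- Farkas' lemma over `ℚ`: either `w` lies in the cone generated by `L`, or there is a
linear functional nonnegative on `L` and negative on `w`. -/
theorem farkasQ (L : List (Vec n)) (w : Vec n) :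
    InCone L w ∨ ∃ x : Vec n, (∀ v ∈ L, 0 ≤ pairQ x v) ∧ pairQ x w < 0 := by
  suffices H : ∀ (k : ℕ) (L : List (Vec n)), L.length = k → ∀ w : Vec n,
      InCone L w ∨ ∃ x : Vec n, (∀ v ∈ L, 0 ≤ pairQ x v) ∧ pairQ x w < 0 by
    exact H L.length L rfl w
  intro k
  induction k with
  | zero =>
    intro L hL w
    rw [List.length_eq_zero_iff] at hL
    subst hL
    by_cases hw : w = 0
    · exact Or.inl (inCone_nil.mpr hw)
    · refine Or.inr ⟨-w, by simp, ?_⟩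
      rw [pairQ_neg_left]
      have := pairQ_self_pos hw
      linarith
  | succ k ih =>
    intro L hL w
    obtain ⟨v, L', rfl⟩ : ∃ v L', L = v :: L' := by
      cases L with
      | nil => simp at hL
      | cons v L' => exact ⟨v, L', rfl⟩
    have hL' : L'.length = k := by simpa using hL
    rcases ih L' hL' w with h | ⟨x₀, hx₀, hx₀w⟩
    · exact Or.inl ⟨0, le_refl 0, by simpa using h⟩
    by_cases hv : 0 ≤ pairQ x₀ v
    · refine Or.inr ⟨x₀, ?_, hx₀w⟩
      intro u hu
      rcases List.mem_cons.mp hu with rfl | hu'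
      · exact hv
      · exact hx₀ u hu'
    push_neg at hv
    have hvne : pairQ x₀ v ≠ 0 := ne_of_lt hv
    set f : Vec n → Vec n := fun u => u - (pairQ x₀ u / pairQ x₀ v) • v with hf
    rcases ih (L'.map f) (by simpa using hL') (f w) with h | ⟨y, hy, hyw⟩
    · -- pull the cone membership back
      have pull : ∀ (L₀ : List (Vec n)) (z : Vec n), InCone (L₀.map f) (f z) →
          ∃ s : ℚ, InCone L₀ (z - s • v) := by
        intro L₀
        induction L₀ with
        | nil =>
          intro z hz
          refine ⟨pairQ x₀ z / pairQ x₀ v, ?_⟩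
          rw [inCone_nil]
          exact inCone_nil.mp hz
        | cons u L₀ ihp =>
          intro z hz
          obtain ⟨t, ht, h₂⟩ := inCone_cons.mp hz
          have key : f z - t • f u = f (z - t • u) := by
            have hc : pairQ x₀ (z - t • u) / pairQ x₀ v
                = pairQ x₀ z / pairQ x₀ v - t * (pairQ x₀ u / pairQ x₀ v) := by
              rw [pairQ_sub_right, pairQ_smul_right]; ring
            rw [hf]
            simp only [hc]
            funext i
            simp only [Pi.sub_apply, Pi.smul_apply, smul_eq_mul]
            ring
          rw [key] at h₂
          obtain ⟨s, hs⟩ := ihp _ h₂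
          refine ⟨s, inCone_cons.mpr ⟨t, ht, ?_⟩⟩
          have : z - s • v - t • u = z - t • u - s • v := sub_right_comm _ _ _
          rw [this]
          exact hs
      obtain ⟨s, hs⟩ := pull L' w h
      have h0 : 0 ≤ pairQ x₀ (w - s • v) := inCone_pair_nonneg x₀ hs hx₀
      rw [pairQ_sub_right, pairQ_smul_right] at h0
      have hspos : 0 ≤ s := by nlinarith
      exact Or.inl (inCone_cons.mpr ⟨s, hspos, hs⟩)
    · refine Or.inr ⟨y - (pairQ y v / pairQ x₀ v) • x₀, ?_, ?_⟩
      all_goals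
        have hkey : ∀ u : Vec n,
            pairQ (y - (pairQ y v / pairQ x₀ v) • x₀) u = pairQ y (f u) := by
          intro u
          rw [hf]
          simp only []
          rw [pairQ_sub_left, pairQ_smul_left, pairQ_sub_right, pairQ_smul_right]
          ring
      · intro u hu
        rcases List.mem_cons.mp hu with rfl | hu'
        · rw [hkey]
          have hfv : f u = 0 := by
            rw [hf]
            simp only []
            rw [div_self hvne, one_smul, sub_self]
          rw [hfv, pairQ_zero_right]
        · rw [hkey]
          exact hy _ (List.mem_map_of_mem (f := f) hu')
      · rw [hkey]
        exact hyw

lemma toQ_add (a b : Fin n → ℤ) : toQ (a + b) = toQ a + toQ b := by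
  funext i; simp [toQ]

lemma toQ_sub (a b : Fin n → ℤ) : toQ (a - b) = toQ a - toQ b := by
  funext i; simp [toQ]

lemma toQ_nsmul (k : ℕ) (a : Fin n → ℤ) : toQ (k • a) = (k : ℚ) • toQ a := by
  funext i
  simp only [toQ, Pi.smul_apply, smul_eq_mul, nsmul_eq_mul]
  push_cast
  ring

lemma IsLatticeVec.exists_int {v : Vec n} (h : IsLatticeVec v) :
    ∃ z : Fin n → ℤ, toQ z = v :=
  ⟨fun i => (h i).choose, funext fun i => ((h i).choose_spec).symm⟩

lemma pairQ_toQ (a b : Fin n → ℤ) :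
    pairQ (toQ a) (toQ b) = ((∑ i, a i * b i : ℤ) : ℚ) := by
  rw [pairQ]
  push_cast
  rfl

lemma exists_nat_clear (x : Vec n) : ∃ N : ℕ, 0 < N ∧ IsLatticeVec ((N : ℚ) • x) := by
  refine ⟨∏ i, (x i).den, Finset.prod_pos (fun i _ => (x i).den_pos), ?_⟩
  intro i
  obtain ⟨c, hc⟩ := Finset.dvd_prod_of_mem (fun i => (x i).den) (Finset.mem_univ i)
  refine ⟨(c : ℤ) * (x i).num, ?_⟩
  have hden : ((x i).den : ℚ) ≠ 0 := by
    exact_mod_cast (x i).den_pos.ne'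
  have hnum : ((x i).num : ℚ) = x i * ((x i).den : ℚ) :=
    (div_eq_iff hden).mp (Rat.num_div_den (x i))
  rw [Pi.smul_apply, smul_eq_mul, hc]
  push_cast
  rw [hnum]
  ring

lemma dualCone_add {σ : Set (Vec n)} {x y : Vec n}
    (hx : x ∈ dualCone σ) (hy : y ∈ dualCone σ) : x + y ∈ dualCone σ := by
  intro p hp
  rw [pairQ_add_left]
  exact add_nonneg (hx p hp) (hy p hp)

lemma dualCone_smul {σ : Set (Vec n)} {t : ℚ} (ht : 0 ≤ t) {x : Vec n}
    (hx : x ∈ dualCone σ) : t • x ∈ dualCone σ := by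
  intro p hp
  rw [pairQ_smul_left]
  exact mul_nonneg ht (hx p hp)

lemma mem_dualCone_coneHull {G : Finset (Vec n)} {x : Vec n}
    (h : ∀ g ∈ G, 0 ≤ pairQ x g) : x ∈ dualCone (coneHull (↑G : Set (Vec n))) := by
  intro p hp
  obtain ⟨F, c, hF, hc, rfl⟩ := hp
  rw [pairQ_sum_right]
  refine Finset.sum_nonneg fun g hg => ?_
  rw [pairQ_smul_right]
  exact mul_nonneg (hc g) (h g (hF hg))

lemma finset_bezout {ι : Type*} [DecidableEq ι] (s : Finset ι) (f : ι → ℤ) :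
    ∃ u : ι → ℤ, ∑ i ∈ s, u i * f i = s.gcd f := by
  induction s using Finset.induction_on with
  | empty => exact ⟨0, by simp⟩
  | @insert a s ha ih =>
    obtain ⟨u, hu⟩ := ih
    refine ⟨fun i => if i = a then (f a).gcdA (s.gcd f) else (f a).gcdB (s.gcd f) * u i, ?_⟩
    rw [Finset.sum_insert ha, Finset.gcd_insert]
    have hcongr : ∀ i ∈ s,
        (if i = a then (f a).gcdA (s.gcd f) else (f a).gcdB (s.gcd f) * u i) * f i
          = (f a).gcdB (s.gcd f) * (u i * f i) := by
      intro i hi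
      rw [if_neg (by rintro rfl; exact ha hi)]
      ring
    rw [Finset.sum_congr rfl hcongr, ← Finset.mul_sum, hu]
    have hbeta : (fun i => if i = a then (f a).gcdA (s.gcd f)
        else (f a).gcdB (s.gcd f) * u i) a = (f a).gcdA (s.gcd f) := by simp
    rw [hbeta]
    have hg : (gcd (f a) (s.gcd f) : ℤ) = ((f a).gcd (s.gcd f) : ℤ) := rfl
    rw [hg, Int.gcd_eq_gcd_ab]
    ring

lemma exists_pair_one {ν : Vec n} (hlat : IsLatticeVec ν) (hν : ν ≠ 0)
    (hprim : ∀ c : ℚ, 0 < c → IsLatticeVec (c • ν) → 1 ≤ c) :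
    ∃ u : Fin n → ℤ, pairQ (toQ u) ν = 1 := by
  classical
  obtain ⟨z, hz⟩ := hlat.exists_int
  obtain ⟨u₀, hu₀⟩ := finset_bezout (Finset.univ : Finset (Fin n)) z
  set d₀ := (Finset.univ : Finset (Fin n)).gcd z with hd₀def
  have hd₀ : d₀ ≠ 0 := by
    intro h
    apply hν
    have hall := Finset.gcd_eq_zero_iff.mp h
    rw [← hz]
    funext i
    simp [toQ, hall i (Finset.mem_univ i)]
  obtain ⟨d, u₁, hdpos, hdvd, hsum⟩ :
      ∃ (d : ℤ) (u₁ : Fin n → ℤ), 0 < d ∧ (∀ i, d ∣ z i) ∧ ∑ i, u₁ i * z i = d := by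
    rcases hd₀.lt_or_gt with hneg | hpos
    · refine ⟨-d₀, fun i => -(u₀ i), by omega, fun i => ?_, ?_⟩
      · exact (Finset.gcd_dvd (Finset.mem_univ i)).neg_left
      · rw [← hu₀]
        simp [neg_mul]
    · exact ⟨d₀, u₀, hpos, fun i => Finset.gcd_dvd (Finset.mem_univ i), hu₀⟩
  have hdQ : (0 : ℚ) < (d : ℚ) := by exact_mod_cast hdpos
  have hd1 : d = 1 := by
    have hc : IsLatticeVec ((d : ℚ)⁻¹ • ν) := by
      intro i
      obtain ⟨q, hq⟩ := hdvd i
      refine ⟨q, ?_⟩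
      have hνi : ν i = ((z i : ℤ) : ℚ) := by rw [← hz]; rfl
      rw [Pi.smul_apply, smul_eq_mul, hνi, hq]
      push_cast
      rw [inv_mul_cancel_left₀ hdQ.ne']
    have h1 := hprim (d : ℚ)⁻¹ (by positivity) hc
    have h2 : (d : ℚ) * 1 ≤ (d : ℚ) * (d : ℚ)⁻¹ :=
      mul_le_mul_of_nonneg_left h1 hdQ.le
    rw [mul_one, mul_inv_cancel₀ hdQ.ne'] at h2
    have : d ≤ 1 := by exact_mod_cast h2
    omega
  refine ⟨u₁, ?_⟩
  rw [← hz, pairQ_toQ, hsum, hd1]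
  norm_num

lemma exists_dual_lattice_pos (σ : Set (Vec n)) (hfull' : FullDim (dualCone σ))
    {ν : Vec n} (hν : ν ≠ 0) (hνσ : ν ∈ σ) :
    ∃ m₀ : Fin n → ℤ, toQ m₀ ∈ dualCone σ ∧ 0 < pairQ (toQ m₀) ν := by
  have hex : ∃ x ∈ dualCone σ, pairQ x ν ≠ 0 := by
    by_contra hcon
    push_neg at hcon
    set F : Vec n →ₗ[ℚ] ℚ :=
      { toFun := fun x => pairQ x ν
        map_add' := fun a b => pairQ_add_left a b ν
        map_smul' := fun c a => by simp [pairQ_smul_left] } with hF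
    have hker : dualCone σ ⊆ (LinearMap.ker F : Set (Vec n)) := by
      intro x hx
      simpa [hF] using hcon x hx
    have hle : Submodule.span ℚ (dualCone σ) ≤ LinearMap.ker F :=
      Submodule.span_le.mpr hker
    rw [hfull'] at hle
    have hν0 : F ν = 0 := LinearMap.mem_ker.mp (hle Submodule.mem_top)
    have : pairQ ν ν = 0 := by simpa [hF] using hν0
    exact absurd this (ne_of_gt (pairQ_self_pos hν))
  obtain ⟨x, hx, hxν⟩ := hex
  have hpos : 0 < pairQ x ν := lt_of_le_of_ne (hx ν hνσ) (Ne.symm hxν)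
  obtain ⟨N, hN, hlat⟩ := exists_nat_clear x
  obtain ⟨m₀, hm₀⟩ := hlat.exists_int
  have hNQ : (0 : ℚ) < (N : ℚ) := by exact_mod_cast hN
  refine ⟨m₀, ?_, ?_⟩
  · rw [hm₀]
    exact dualCone_smul hNQ.le hx
  · rw [hm₀, pairQ_smul_left]
    positivity

end FarkasHelpers

/-- Remark 2.7: for a pointed full-dimensional rational polyhedral cone `σ`, an extremal
ray `ρ` of `σ` with primitive generator `ν`, and dual facet `τ = σ^∨ ∩ ρ^⊥`, the set
`S_ρ = {e ∈ M : e ∉ σ^∨, and m + e ∈ σ^∨ ∩ M for all m ∈ (σ^∨ ∩ M) \ (τ ∩ M)}`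
is nonempty, and it is stable under adding lattice points of `τ`. -/
theorem stmt6 {n : ℕ} (σ ρ : Set (Vec n)) (ν : Vec n)
    (hσ : IsRatPolyCone σ) (hpt : PointedCone' σ) (hfull : FullDim σ)
    (hfull' : FullDim (dualCone σ))
    (hρ : IsExtremalRay σ ρ ν) :
    (∃ e : Fin n → ℤ,
      toQ e ∉ dualCone σ ∧
      (∀ m : Fin n → ℤ, toQ m ∈ dualCone σ → pairQ (toQ m) ν ≠ 0 →
        toQ (m + e) ∈ dualCone σ)) ∧
    (∀ e m : Fin n → ℤ,
      (toQ e ∉ dualCone σ ∧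
        (∀ m' : Fin n → ℤ, toQ m' ∈ dualCone σ → pairQ (toQ m') ν ≠ 0 →
          toQ (m' + e) ∈ dualCone σ)) →
      toQ m ∈ dualCone σ → pairQ (toQ m) ν = 0 →
      (toQ (e + m) ∉ dualCone σ ∧
        (∀ m' : Fin n → ℤ, toQ m' ∈ dualCone σ → pairQ (toQ m') ν ≠ 0 →
          toQ (m' + (e + m)) ∈ dualCone σ))) := by
  classical
  obtain ⟨hνlat, hνne, hprim, hρdef, hρsub, hext⟩ := hρ
  obtain ⟨G, hGlat, hσdef⟩ := hσ
  have hνρ : ν ∈ ρ := by rw [hρdef]; exact ⟨1, zero_le_one, (one_smul ℚ ν).symm⟩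
  have hνσ : ν ∈ σ := hρsub hνρ
  obtain ⟨zν, hzν⟩ := hνlat.exists_int
  -- integrality: a lattice point pairing nonnegatively and nontrivially with ν pairs ≥ 1
  have hge1 : ∀ m : Fin n → ℤ, 0 ≤ pairQ (toQ m) ν → pairQ (toQ m) ν ≠ 0 →
      1 ≤ pairQ (toQ m) ν := by
    intro m h0 hne
    rw [← hzν, pairQ_toQ] at h0 hne ⊢
    have h0' : (0 : ℤ) ≤ ∑ i, m i * zν i := by exact_mod_cast h0
    have hne' : (∑ i, m i * zν i) ≠ 0 := by exact_mod_cast hne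
    exact_mod_cast (by omega : (1 : ℤ) ≤ ∑ i, m i * zν i)
  set S : Finset (Vec n) := G.filter (fun g => g ∉ ρ) with hS
  have hSG : ∀ g ∈ S, g ∈ G := fun g hg => (Finset.mem_filter.mp hg).1
  have hSσ : ∀ g ∈ S, g ∈ σ := fun g hg => by
    rw [hσdef]; exact subset_coneHull _ (Finset.mem_coe.mpr (hSG g hg))
  have hSρ : ∀ g ∈ S, g ∉ ρ := fun g hg => (Finset.mem_filter.mp hg).2
  -- strict separating functionals, via Farkas and extremality
  have hxg : ∀ g₀ ∈ S, ∃ x : Vec n,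
      pairQ x ν = 0 ∧ (∀ g ∈ S, 0 ≤ pairQ x g) ∧ 0 < pairQ x g₀ := by
    intro g₀ hg₀
    rcases farkasQ (ν :: (-ν) :: S.toList) (-g₀) with hIn | ⟨x, hx, hxw⟩
    · exfalso
      obtain ⟨a, ha, hIn1⟩ := inCone_cons.mp hIn
      obtain ⟨b, hb, hIn2⟩ := inCone_cons.mp hIn1
      have hsσ : (-g₀ - a • ν - b • (-ν)) ∈ coneHull (↑G : Set (Vec n)) := by
        refine inCone_mem_coneHull hIn2 fun v hv => ?_
        exact subset_coneHull _ (Finset.mem_coe.mpr (hSG v (Finset.mem_toList.mp hv)))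
      have haν : a • ν ∈ coneHull (↑G : Set (Vec n)) := by
        refine coneHull_smul ha ?_
        rw [← hσdef]; exact hνσ
      have hyσ : ((-g₀ - a • ν - b • (-ν)) + a • ν) ∈ σ := by
        rw [hσdef]; exact coneHull_add hsσ haν
      have hbν : g₀ + ((-g₀ - a • ν - b • (-ν)) + a • ν) = b • ν := by
        funext i
        simp only [Pi.add_apply, Pi.sub_apply, Pi.neg_apply, Pi.smul_apply, smul_eq_mul]
        ring
      have hmem : g₀ + ((-g₀ - a • ν - b • (-ν)) + a • ν) ∈ ρ := by
        rw [hbν, hρdef]; exact ⟨b, hb, rfl⟩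
      exact hSρ g₀ hg₀ (hext g₀ (hSσ g₀ hg₀) _ hyσ hmem)
    · have h1 : 0 ≤ pairQ x ν := hx ν (by simp)
      have h2 : 0 ≤ pairQ x (-ν) := hx (-ν) (by simp)
      rw [pairQ_neg_right] at h2
      have hν0 : pairQ x ν = 0 := le_antisymm (by linarith) h1
      rw [pairQ_neg_right] at hxw
      refine ⟨x, hν0, fun g hg => hx g ?_, by linarith⟩
      simp [Finset.mem_toList.mpr hg]
  choose xf hxf1 hxf2 hxf3 using hxg
  set w : Vec n := ∑ g₀ ∈ S.attach, xf g₀.1 g₀.2 with hw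
  have hwv : pairQ w ν = 0 := by
    rw [hw, pairQ_sum_left]
    exact Finset.sum_eq_zero fun g _ => hxf1 g.1 g.2
  have hwg : ∀ g ∈ S, 0 ≤ pairQ w g := by
    intro g hg
    rw [hw, pairQ_sum_left]
    exact Finset.sum_nonneg fun i _ => hxf2 i.1 i.2 g hg
  have hwg' : ∀ g ∈ S, 0 < pairQ w g := by
    intro g hg
    rw [hw, pairQ_sum_left]
    refine Finset.sum_pos' (fun i _ => hxf2 i.1 i.2 g hg) ⟨⟨g, hg⟩, Finset.mem_attach _ _, ?_⟩
    exact hxf3 g hg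
  obtain ⟨u, hu⟩ := exists_pair_one hνlat hνne hprim
  obtain ⟨N₀, hN₀, hN₀lat⟩ := exists_nat_clear w
  obtain ⟨zw, hzw⟩ := hN₀lat.exists_int
  have hN₀Q : (0 : ℚ) < (N₀ : ℚ) := by exact_mod_cast hN₀
  have hzwv : pairQ (toQ zw) ν = 0 := by rw [hzw, pairQ_smul_left, hwv, mul_zero]
  have hzwg : ∀ g ∈ S, 0 < pairQ (toQ zw) g := fun g hg => by
    rw [hzw, pairQ_smul_left]
    exact mul_pos hN₀Q (hwg' g hg)
  obtain ⟨M, hM⟩ : ∃ M : ℕ, ∀ g ∈ S, pairQ (toQ u) g ≤ (M : ℚ) * pairQ (toQ zw) g := by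
    obtain ⟨M, hM⟩ := exists_nat_gt (∑ g ∈ S, |pairQ (toQ u) g| / pairQ (toQ zw) g)
    refine ⟨M, fun g hg => ?_⟩
    have hterm : ∀ g' ∈ S, 0 ≤ |pairQ (toQ u) g'| / pairQ (toQ zw) g' := fun g' hg' =>
      div_nonneg (abs_nonneg _) (hzwg g' hg').le
    have hR : |pairQ (toQ u) g| / pairQ (toQ zw) g
        ≤ ∑ g' ∈ S, |pairQ (toQ u) g'| / pairQ (toQ zw) g' :=
      Finset.single_le_sum hterm hg
    have h3 : |pairQ (toQ u) g| ≤ (M : ℚ) * pairQ (toQ zw) g :=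
      (div_le_iff₀ (hzwg g hg)).mp (le_trans hR hM.le)
    exact le_trans (le_abs_self _) h3
  set e : Fin n → ℤ := M • zw - u with he
  have heQ : toQ e = (M : ℚ) • toQ zw - toQ u := by rw [he, toQ_sub, toQ_nsmul]
  have heν : pairQ (toQ e) ν = -1 := by
    rw [heQ, pairQ_sub_left, pairQ_smul_left, hzwv, hu]
    ring
  have heg : ∀ g ∈ S, 0 ≤ pairQ (toQ e) g := by
    intro g hg
    rw [heQ, pairQ_sub_left, pairQ_smul_left]
    have := hM g hg
    linarith
  -- the chosen `e` works
  have He : toQ e ∉ dualCone σ ∧ ∀ m : Fin n → ℤ, toQ m ∈ dualCone σ →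
      pairQ (toQ m) ν ≠ 0 → toQ (m + e) ∈ dualCone σ := by
    constructor
    · intro hmem
      have := hmem ν hνσ
      rw [heν] at this
      linarith
    · intro m hm hmν
      have hm1 : 1 ≤ pairQ (toQ m) ν := hge1 m (hm ν hνσ) hmν
      rw [hσdef]
      apply mem_dualCone_coneHull
      intro g hg
      rw [toQ_add, pairQ_add_left]
      by_cases hgρ : g ∈ ρ
      · have : g ∈ {x | ∃ c : ℚ, 0 ≤ c ∧ x = c • ν} := hρdef ▸ hgρ
        obtain ⟨c, hc, rfl⟩ := this
        rw [pairQ_smul_right, pairQ_smul_right, heν]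
        nlinarith
      · have hgS : g ∈ S := Finset.mem_filter.mpr ⟨hg, hgρ⟩
        have h1 : 0 ≤ pairQ (toQ m) g := hm g (by
          rw [hσdef]; exact subset_coneHull _ (Finset.mem_coe.mpr hg))
        exact add_nonneg h1 (heg g hgS)
  refine ⟨⟨e, He.1, He.2⟩, ?_⟩
  -- stability under adding lattice points of τ
  rintro e' m ⟨he'₁, he'₂⟩ hm hmν
  obtain ⟨m₀, hm₀dual, hm₀pos⟩ := exists_dual_lattice_pos σ hfull' hνne hνσ
  have heν' : pairQ (toQ e') ν < 0 := by
    by_contra hcon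
    push_neg at hcon
    have hiter : ∀ k : ℕ, toQ (m₀ + k • e') ∈ dualCone σ := by
      intro k
      induction k with
      | zero => simpa using hm₀dual
      | succ k ih =>
        have hne : pairQ (toQ (m₀ + k • e')) ν ≠ 0 := by
          rw [toQ_add, toQ_nsmul, pairQ_add_left, pairQ_smul_left]
          have : 0 < pairQ (toQ m₀) ν + (k : ℚ) * pairQ (toQ e') ν :=
            add_pos_of_pos_of_nonneg hm₀pos (mul_nonneg (Nat.cast_nonneg k) hcon)
          exact this.ne'
        have hstep := he'₂ (m₀ + k • e') ih hne
        have harr : m₀ + k • e' + e' = m₀ + (k + 1) • e' := by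
          rw [succ_nsmul, ← add_assoc]
        rwa [harr] at hstep
    have he'dual : toQ e' ∈ dualCone σ := by
      intro p hp
      by_contra hneg
      push_neg at hneg
      obtain ⟨k, hk⟩ := exists_nat_gt (pairQ (toQ m₀) p / (-(pairQ (toQ e') p)))
      have h2 := hiter k p hp
      rw [toQ_add, toQ_nsmul, pairQ_add_left, pairQ_smul_left] at h2
      rw [div_lt_iff₀ (by linarith)] at hk
      nlinarith
    exact he'₁ he'dual
  constructor
  · intro hmem
    have := hmem ν hνσ
    rw [toQ_add, pairQ_add_left, hmν, add_zero] at this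
    linarith
  · intro m' hm' hm'ν
    have hsum : toQ (m' + m) ∈ dualCone σ := by
      rw [toQ_add]
      exact dualCone_add hm' hm
    have hsν : pairQ (toQ (m' + m)) ν ≠ 0 := by
      rw [toQ_add, pairQ_add_left, hmν, add_zero]
      exact hm'ν
    have hstep := he'₂ (m' + m) hsum hsν
    have harr : m' + m + e' = m' + (e' + m) := by ring
    rwa [harr] at hstep
end
end

section
/- Let A = K[σ^∨ ∩ M] be an affine semigroup algebra over a field K of characteristic 0 with σ pointed and full-dimensional. Every nonzero homogeneous locally nilpotent derivation ∂ on A has degree deg ∂ ∉ σ^∨, i.e., ∂ is negative. -/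
open scoped BigOperators Pointwise

noncomputable section

open AddMonoidAlgebra in
/-- Corollary 2.11 (toric-negative): every nonzero homogeneous locally nilpotent
derivation of the affine semigroup algebra `K[σ^∨ ∩ M]`, of degree `e`, satisfies
`e ∉ σ^∨`, i.e. it is negative. -/
theorem stmt9 {n : ℕ} (K : Type*) [Field K] [CharZero K]
    (σ : Set (Vec n))
    (hσ : IsRatPolyCone σ) (hpt : PointedCone' σ) (hfull : FullDim σ)
    (D : Derivation K (AddMonoidAlgebra K ↥(latticeCone σ))
        (AddMonoidAlgebra K ↥(latticeCone σ)))
    (hDne : D ≠ 0) (hlnd : IsLND D)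
    (e : Fin n → ℤ)
    (hdeg : ∀ m : latticeCone σ, D (single m (1 : K)) ≠ 0 →
      ∃ (m' : latticeCone σ) (c : K),
        (m' : Fin n → ℤ) = (m : Fin n → ℤ) + e ∧ D (single m (1 : K)) = single m' c) :
    toQ e ∉ dualCone σ := by
  intro he
  classical
  have heS : e ∈ latticeCone σ := he
  set eS : latticeCone σ := ⟨e, heS⟩ with heSdef
  set φ : latticeCone σ → K := fun m => (D (single m 1)).coeff (m + eS) with hφdef
  -- key structural lemma
  have key : ∀ m : latticeCone σ, D (single m (1:K)) = single (m + eS) (φ m) := by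
    intro m
    by_cases h : D (single m (1:K)) = 0
    · have h0 : φ m = 0 := by simp [hφdef, h]
      simp [h, h0]
    · obtain ⟨m', c, hm', hc⟩ := hdeg m h
      have hm'' : m' = m + eS := by
        apply Subtype.ext
        simpa using hm'
      have hc' : φ m = c := by
        rw [hφdef]
        simp only []
        rw [hc, hm'']
        exact Finsupp.single_eq_same
      rw [hc, hm'', hc']
  -- additivity of φ
  have hadd : ∀ a b : latticeCone σ, φ (a + b) = φ a + φ b := by
    intro a b
    have h1 : single (a + b) (1:K) = single a 1 * single b 1 := by
      rw [AddMonoidAlgebra.single_mul_single, one_mul]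
    have h2 := D.leibniz (single a (1:K)) (single b 1)
    rw [← h1, key, key, key] at h2
    have h3 := congrArg (fun f => f.coeff (a + b + eS)) h2
    simp only [smul_eq_mul, AddMonoidAlgebra.single_mul_single, one_mul, mul_one,
      AddMonoidAlgebra.coeff_add, AddMonoidAlgebra.coeff_single,
      Finsupp.add_apply, Finsupp.single_eq_same] at h3
    have e1 : a + (b + eS) = a + b + eS := by rw [add_assoc]
    have e2 : b + (a + eS) = a + b + eS := by
      rw [← add_assoc, add_comm b a]
    rw [e1, e2] at h3
    erw [Finsupp.single_eq_same, Finsupp.single_eq_same] at h3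
    rw [h3]; ring
  -- iteration formula
  have iter : ∀ (m : latticeCone σ) (k : ℕ), (⇑D)^[k] (single m (1:K)) =
      single (m + k • eS) (∏ j ∈ Finset.range k, φ (m + j • eS)) := by
    intro m k
    induction k with
    | zero => simp
    | succ k ih =>
      rw [Function.iterate_succ_apply', ih]
      have hsm : (single (m + k • eS) (∏ j ∈ Finset.range k, φ (m + j • eS)) :
          AddMonoidAlgebra K (latticeCone σ))
          = (∏ j ∈ Finset.range k, φ (m + j • eS)) • single (m + k • eS) (1:K) := by
        rw [AddMonoidAlgebra.smul_single, smul_eq_mul, mul_one]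
      rw [hsm, D.map_smul, key, AddMonoidAlgebra.smul_single, smul_eq_mul]
      congr 1
      · rw [succ_nsmul, ← add_assoc]
      · rw [Finset.prod_range_succ]
  -- φ on arithmetic progressions
  have hns : ∀ (j : ℕ) (m : latticeCone σ), φ (m + j • eS) = φ m + (j : K) * φ eS := by
    intro j
    induction j with
    | zero => intro m; simp
    | succ j ih =>
      intro m
      rw [succ_nsmul, ← add_assoc, hadd, ih]
      push_cast
      ring
  -- local nilpotence forces a zero on every progression
  have hzero : ∀ m : latticeCone σ, ∃ j : ℕ, φ (m + j • eS) = 0 := by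
    intro m
    obtain ⟨k, hk⟩ := hlnd (single m 1)
    rw [iter m k] at hk
    have hp : (∏ j ∈ Finset.range k, φ (m + j • eS)) = 0 :=
      AddMonoidAlgebra.single_eq_zero.mp hk
    obtain ⟨j, _, hj0⟩ := Finset.prod_eq_zero_iff.mp hp
    exact ⟨j, hj0⟩
  -- φ eS = 0
  have heφ : φ eS = 0 := by
    by_contra h
    obtain ⟨j, hj⟩ := hzero eS
    rw [hns j eS] at hj
    have h1 : ((j : K) + 1) * φ eS = 0 := by linear_combination hj
    have h2 : ((j : K) + 1) ≠ 0 := by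
      have hne : ((j + 1 : ℕ) : K) ≠ 0 := Nat.cast_ne_zero.mpr (Nat.succ_ne_zero j)
      push_cast at hne
      exact hne
    rcases mul_eq_zero.mp h1 with h' | h'
    · exact h2 h'
    · exact h h'
  -- hence φ ≡ 0
  have hφ0 : ∀ m : latticeCone σ, φ m = 0 := by
    intro m
    obtain ⟨j, hj⟩ := hzero m
    rwa [hns j m, heφ, mul_zero, add_zero] at hj
  -- hence D = 0, contradiction
  apply hDne
  apply Derivation.ext
  intro x
  have hall : ∀ x : AddMonoidAlgebra K (latticeCone σ), D x = 0 := by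
    intro x
    induction x using AddMonoidAlgebra.induction_linear with
    | zero => simp
    | add f g hf hg => rw [map_add, hf, hg, add_zero]
    | single a b =>
      have hb : (single a b : AddMonoidAlgebra K (latticeCone σ))
          = b • single a (1:K) := by
        rw [AddMonoidAlgebra.smul_single, smul_eq_mul, mul_one]
      rw [hb, D.map_smul, key, hφ0]
      simp
  rw [hall x]
  simp
end
end

section
/- A nonzero homogeneous locally nilpotent derivation ∂ on an affine semigroup algebra A = K[σ^∨ ∩ M] is uniquely determined, up to multiplication by a nonzero scalar in K, by its degree e = deg ∂. Concretely: if ∂ and ∂' are nonzero homogeneous LNDs on A with deg ∂ = deg ∂', then ∂' = λ∂ for some λ ∈ K^*. -/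
open scoped BigOperators Pointwise

noncomputable section

open AddMonoidAlgebra in
lemma chainval {n : ℕ} {K : Type*} [Field K] (S : AddSubmonoid (Fin n → ℤ))
    (C : (Fin n → ℤ) → K) (δ : K) (e : Fin n → ℤ)
    (hstep : ∀ v, v ∈ S → v + e ∈ S → C (v + e) = C v + δ) :
    ∀ (v : Fin n → ℤ) (j : ℕ), (∀ i : ℕ, i ≤ j → v + i • e ∈ S) →
      ∀ i : ℕ, i ≤ j → C (v + i • e) = C v + (i : K) * δ := by
  intro v j hmem i
  induction i with
  | zero => intro _; simp
  | succ i ih =>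
    intro hij
    have hi : i ≤ j := Nat.le_of_succ_le hij
    have h1 : v + (i + 1) • e = (v + i • e) + e := by
      rw [succ_nsmul]; abel
    rw [h1, hstep _ (hmem i hi) (by rw [← h1]; exact hmem _ hij), ih hi]
    push_cast; ring

open AddMonoidAlgebra in
lemma auxC {n : ℕ} {K : Type*} [Field K] [CharZero K] (S : AddSubmonoid (Fin n → ℤ))
    (D : Derivation K (AddMonoidAlgebra K ↥S) (AddMonoidAlgebra K ↥S))
    (hDne : D ≠ 0) (hlnd : IsLND D) (e : Fin n → ℤ)
    (hdeg : ∀ m : S, D (single m (1 : K)) ≠ 0 →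
      ∃ (m' : S) (c : K),
        (m' : Fin n → ℤ) = (m : Fin n → ℤ) + e ∧ D (single m (1 : K)) = single m' c) :
    ∃ (C : (Fin n → ℤ) → K) (δ : K), δ ≠ 0 ∧
      (∀ m : S, (C ↑m = 0 → D (single m (1:K)) = 0) ∧
        (C ↑m ≠ 0 → ∃ h : ((m : Fin n → ℤ) + e) ∈ S,
          D (single m (1:K)) = single (⟨(m : Fin n → ℤ) + e, h⟩ : S) (C ↑m))) ∧
      (∀ v, v ∈ S → v + e ∈ S → C (v + e) = C v + δ) ∧
      (∀ v, v ∈ S → C v ≠ 0 →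
        ∃ j : ℕ, (∀ i : ℕ, i ≤ j → v + i • e ∈ S) ∧ C (v + j • e) = 0) := by
  classical
  -- choose coefficients
  have hPc : ∀ q : S, ∃ v : K,
      (v = 0 → D (single q (1:K)) = 0) ∧
      (v ≠ 0 → ∃ h : ((q : Fin n → ℤ) + e) ∈ S,
        D (single q (1:K)) = single (⟨(q : Fin n → ℤ) + e, h⟩ : S) v) := by
    intro q
    by_cases h : D (single q (1:K)) = 0
    · exact ⟨0, fun _ => h, fun h0 => absurd rfl h0⟩
    · obtain ⟨q', v, hq', hv⟩ := hdeg q h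
      refine ⟨v, fun hv0 => ?_, fun _ => ?_⟩
      · rw [hv, hv0]; simp
      · refine ⟨hq' ▸ q'.2, ?_⟩
        rw [hv]
        congr 1
        exact Subtype.ext hq'
  choose c hc using hPc
  set C : (Fin n → ℤ) → K := fun v => if h : v ∈ S then c ⟨v, h⟩ else 0 with hCdef
  have hCq : ∀ q : S, C ↑q = c q := by
    intro q; rw [hCdef]; simp
  have hC1 : ∀ m : S, (C ↑m = 0 → D (single m (1:K)) = 0) ∧
      (C ↑m ≠ 0 → ∃ h : ((m : Fin n → ℤ) + e) ∈ S,
        D (single m (1:K)) = single (⟨(m : Fin n → ℤ) + e, h⟩ : S) (C ↑m)) := by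
    intro m
    rw [hCq]
    exact hc m
  have hc0 : ∀ q : S, D (single q (1:K)) = 0 → C ↑q = 0 := by
    intro q hq
    by_contra h
    obtain ⟨hm, heq⟩ := (hC1 q).2 h
    rw [heq] at hq
    exact h (by simpa [AddMonoidAlgebra.single_eq_zero] using hq)
  -- Leibniz on monomials
  have leib : ∀ a b : S, D (single (a + b) (1:K)) =
      single a (1:K) * D (single b 1) + single b (1:K) * D (single a 1) := by
    intro a b
    have h : (single (a+b) (1:K) : AddMonoidAlgebra K ↥S) = single a 1 * single b 1 := by
      rw [AddMonoidAlgebra.single_mul_single, one_mul]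
    rw [h, Derivation.leibniz]
    simp [smul_eq_mul]
  -- additivity
  have cadd : ∀ a b : S, C ↑(a + b) = C ↑a + C ↑b := by
    intro a b
    by_cases ha : C ↑a = 0
    · by_cases hb : C ↑b = 0
      · have h0 : D (single (a+b) (1:K)) = 0 := by
          rw [leib, (hC1 a).1 ha, (hC1 b).1 hb]; simp
        rw [hc0 _ h0, ha, hb, add_zero]
      · obtain ⟨hmb, hDb⟩ := (hC1 b).2 hb
        have hD : D (single (a+b) (1:K)) =
            single (a + (⟨(b:Fin n → ℤ)+e, hmb⟩:S)) (C ↑b) := by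
          rw [leib, (hC1 a).1 ha, hDb, AddMonoidAlgebra.single_mul_single, one_mul]
          simp
        have hne : D (single (a+b) (1:K)) ≠ 0 := by
          intro h0
          rw [hD] at h0
          exact hb (AddMonoidAlgebra.single_eq_zero.1 h0)
        have hCab : C ↑(a+b) ≠ 0 := fun h => hne ((hC1 (a+b)).1 h)
        obtain ⟨hmab, hDab⟩ := (hC1 (a+b)).2 hCab
        rw [hD] at hDab
        rcases AddMonoidAlgebra.single_inj.1 hDab with ⟨_, h2⟩ | ⟨h1, _⟩
        · rw [ha, ← h2, zero_add]
        · exact absurd h1 hb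
    · by_cases hb : C ↑b = 0
      · obtain ⟨hma, hDa⟩ := (hC1 a).2 ha
        have hD : D (single (a+b) (1:K)) =
            single (b + (⟨(a:Fin n → ℤ)+e, hma⟩:S)) (C ↑a) := by
          rw [leib, (hC1 b).1 hb, hDa, AddMonoidAlgebra.single_mul_single, one_mul]
          simp
        have hne : D (single (a+b) (1:K)) ≠ 0 := by
          intro h0
          rw [hD] at h0
          exact ha (AddMonoidAlgebra.single_eq_zero.1 h0)
        have hCab : C ↑(a+b) ≠ 0 := fun h => hne ((hC1 (a+b)).1 h)
        obtain ⟨hmab, hDab⟩ := (hC1 (a+b)).2 hCab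
        rw [hD] at hDab
        rcases AddMonoidAlgebra.single_inj.1 hDab with ⟨_, h2⟩ | ⟨h1, _⟩
        · rw [hb, ← h2, add_zero]
        · exact absurd h1 ha
      · obtain ⟨hma, hDa⟩ := (hC1 a).2 ha
        obtain ⟨hmb, hDb⟩ := (hC1 b).2 hb
        have hidx : b + (⟨(a:Fin n → ℤ)+e, hma⟩:S) = a + (⟨(b:Fin n → ℤ)+e, hmb⟩:S) := by
          apply Subtype.ext
          push_cast
          abel
        have hD : D (single (a+b) (1:K)) =
            single (a + (⟨(b:Fin n → ℤ)+e, hmb⟩:S)) (C ↑b + C ↑a) := by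
          rw [leib, hDa, hDb, AddMonoidAlgebra.single_mul_single,
            AddMonoidAlgebra.single_mul_single, one_mul, one_mul, hidx,
            ← AddMonoidAlgebra.single_add]
        by_cases hs : C ↑b + C ↑a = 0
        · have h0 : D (single (a+b) (1:K)) = 0 := by
            rw [hD, hs]; simp
          rw [hc0 _ h0]
          linear_combination -hs
        · have hne : D (single (a+b) (1:K)) ≠ 0 := by
            intro h0
            rw [hD] at h0
            exact hs (AddMonoidAlgebra.single_eq_zero.1 h0)
          have hCab : C ↑(a+b) ≠ 0 := fun h => hne ((hC1 (a+b)).1 h)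
          obtain ⟨hmab, hDab⟩ := (hC1 (a+b)).2 hCab
          rw [hD] at hDab
          rcases AddMonoidAlgebra.single_inj.1 hDab with ⟨_, h2⟩ | ⟨h1, _⟩
          · rw [← h2]; ring
          · exact absurd h1 hs
  have caddA : ∀ u w, u ∈ S → w ∈ S → C (u + w) = C u + C w := by
    intro u w hu hw
    exact cadd ⟨u, hu⟩ ⟨w, hw⟩
  have czero : C 0 = 0 := by
    have h0 : D (single (0:S) (1:K)) = 0 := by
      have h1 : (single (0:S) (1:K) : AddMonoidAlgebra K ↥S) = 1 := rfl
      rw [h1, Derivation.map_one_eq_zero]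
    exact hc0 0 h0
  have csmulA : ∀ (k : ℕ) (u : Fin n → ℤ), u ∈ S → C (k • u) = (k:K) * C u := by
    intro k u hu
    induction k with
    | zero => simpa using czero
    | succ k ih =>
      rw [succ_nsmul, caddA _ _ (S.nsmul_mem hu k) hu, ih]
      push_cast; ring
  -- nonvanishing
  have hex : ∃ q : S, C ↑q ≠ 0 := by
    by_contra h
    push_neg at h
    apply hDne
    apply Derivation.ext
    intro x
    show D x = 0
    induction x using AddMonoidAlgebra.induction_linear with
    | zero => simp
    | add f g hf hg => rw [map_add, hf, hg, add_zero]
    | single q b =>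
      have hb : (AddMonoidAlgebra.single q b : AddMonoidAlgebra K ↥S) = b • single q (1:K) := by
        rw [AddMonoidAlgebra.smul_single', mul_one]
      rw [hb, D.map_smul, (hC1 q).1 (h q), smul_zero]
  obtain ⟨m₀, hm₀⟩ := hex
  -- chains from LND
  have chain : ∀ (v : Fin n → ℤ), v ∈ S → C v ≠ 0 →
      ∃ j : ℕ, (∀ i : ℕ, i ≤ j → v + i • e ∈ S) ∧ C (v + j • e) = 0 := by
    intro v hv hCv
    obtain ⟨k, hk⟩ := hlnd (single (⟨v, hv⟩:S) (1:K))
    have hkex : ∃ k, (⇑D)^[k] (single (⟨v, hv⟩:S) (1:K)) = 0 := ⟨k, hk⟩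
    have hN : (⇑D)^[Nat.find hkex] (single (⟨v, hv⟩:S) (1:K)) = 0 := Nat.find_spec hkex
    set N := Nat.find hkex with hNdef
    have hmin : ∀ i, i < N → (⇑D)^[i] (single (⟨v, hv⟩:S) (1:K)) ≠ 0 :=
      fun i hi => Nat.find_min hkex hi
    have rep : ∀ i, i < N → ∃ (q : S) (t : K), ((q:Fin n → ℤ) = v + i • e) ∧ t ≠ 0 ∧
        (⇑D)^[i] (single (⟨v, hv⟩:S) (1:K)) = t • single q (1:K) := by
      intro i
      induction i with
      | zero => exact fun _ => ⟨⟨v, hv⟩, 1, by simp, one_ne_zero, by simp⟩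
      | succ i ih =>
        intro hi
        obtain ⟨q, t, hq, ht, hx⟩ := ih (Nat.lt_of_succ_lt hi)
        have hDq : D (single q (1:K)) ≠ 0 := by
          intro h0
          apply hmin (i+1) hi
          rw [Function.iterate_succ_apply', hx, D.map_smul, h0, smul_zero]
        have hCq' : C ↑q ≠ 0 := fun h => hDq ((hC1 q).1 h)
        obtain ⟨hm, hDq2⟩ := (hC1 q).2 hCq'
        refine ⟨⟨(q:Fin n → ℤ) + e, hm⟩, t * C ↑q, ?_, mul_ne_zero ht hCq', ?_⟩
        · show (q:Fin n → ℤ) + e = v + (i+1) • e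
          rw [hq, succ_nsmul]; abel
        · rw [Function.iterate_succ_apply', hx, D.map_smul, hDq2,
            AddMonoidAlgebra.smul_single', AddMonoidAlgebra.smul_single', mul_one]
    have hN1 : N ≠ 0 := by
      intro h0
      rw [h0, Function.iterate_zero_apply] at hN
      exact one_ne_zero (AddMonoidAlgebra.single_eq_zero.1 hN)
    obtain ⟨j, hjN⟩ : ∃ j, N = j + 1 := ⟨N - 1, (Nat.succ_pred_eq_of_ne_zero hN1).symm⟩
    obtain ⟨q, t, hq, ht, hx⟩ := rep j (by omega)
    have hDq0 : D (single q (1:K)) = 0 := by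
      have h5 := hN
      rw [hjN, Function.iterate_succ_apply', hx, D.map_smul] at h5
      exact (smul_eq_zero.1 h5).resolve_left ht
    refine ⟨j, ?_, ?_⟩
    · intro i hij
      obtain ⟨qi, _, hqi, _, _⟩ := rep i (by omega)
      rw [← hqi]; exact qi.2
    · have h6 := hc0 q hDq0
      rwa [hq] at h6
  -- the increment δ
  obtain ⟨hm₀e, _⟩ := (hC1 m₀).2 hm₀
  set δ : K := C ((m₀:Fin n → ℤ) + e) - C ↑m₀ with hδdef
  have stepNZ : ∀ v, v ∈ S → C v ≠ 0 → ((v + e) ∈ S ∧ C (v + e) = C v + δ) := by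
    intro v hv ha
    obtain ⟨hae, _⟩ := (hC1 (⟨v, hv⟩:S)).2 ha
    refine ⟨hae, ?_⟩
    have h1 : C ((m₀:Fin n → ℤ) + (v + e)) = C ↑m₀ + C (v + e) := caddA _ _ m₀.2 hae
    have h2 : C (((m₀:Fin n → ℤ) + e) + v) = C ((m₀:Fin n → ℤ) + e) + C v :=
      caddA _ _ hm₀e hv
    have h3 : (m₀:Fin n → ℤ) + (v + e) = ((m₀:Fin n → ℤ) + e) + v := by abel
    rw [h3, h2] at h1
    rw [hδdef]
    linear_combination -h1
  have stepGen : ∀ v, v ∈ S → v + e ∈ S → C (v + e) = C v + δ := by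
    intro v hv hve
    obtain ⟨k, hk⟩ : ∃ k : ℕ, (k:K) * C ↑m₀ + C v ≠ 0 := by
      by_cases h : (1:K) * C ↑m₀ + C v = 0
      · refine ⟨2, fun h2 => hm₀ ?_⟩
        push_cast at h h2
        linear_combination h2 - h
      · exact ⟨1, by simpa using h⟩
    have hw : (k • (m₀:Fin n → ℤ)) + v ∈ S := S.add_mem (S.nsmul_mem m₀.2 k) hv
    have hCw : C ((k • (m₀:Fin n → ℤ)) + v) = (k:K) * C ↑m₀ + C v := by
      rw [caddA _ _ (S.nsmul_mem m₀.2 k) hv, csmulA _ _ m₀.2]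
    obtain ⟨_, hst⟩ := stepNZ _ hw (by rw [hCw]; exact hk)
    have h4 : (k • (m₀:Fin n → ℤ)) + v + e = (k • (m₀:Fin n → ℤ)) + (v + e) := by abel
    rw [h4, caddA _ _ (S.nsmul_mem m₀.2 k) hve, csmulA _ _ m₀.2, hCw] at hst
    linear_combination hst
  have hδ : δ ≠ 0 := by
    intro h0
    obtain ⟨j, hmem, hj0⟩ := chain ↑m₀ m₀.2 hm₀
    have h7 := chainval S C δ e stepGen ↑m₀ j hmem j (le_refl j)
    rw [hj0, h0, mul_zero, add_zero] at h7
    exact hm₀ h7.symm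
  exact ⟨C, δ, hδ, hC1, stepGen, chain⟩


open AddMonoidAlgebra in
/-- Corollary 2.10 (toric-degree): a nonzero homogeneous locally nilpotent derivation
on the affine semigroup algebra `A = K[σ^∨ ∩ M]` is uniquely determined, up to a nonzero
scalar of `K`, by its degree: if `∂, ∂'` are nonzero homogeneous LNDs with the same
degree `e`, then `∂' = λ • ∂` for some `λ ∈ K^*`. -/
theorem stmt11 {n : ℕ} (K : Type*) [Field K] [CharZero K]
    (σ : Set (Vec n))
    (hσ : IsRatPolyCone σ) (hpt : PointedCone' σ) (hfull : FullDim σ)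
    (D D' : Derivation K (AddMonoidAlgebra K ↥(latticeCone σ))
        (AddMonoidAlgebra K ↥(latticeCone σ)))
    (hDne : D ≠ 0) (hD'ne : D' ≠ 0) (hlnd : IsLND D) (hlnd' : IsLND D')
    (e : Fin n → ℤ)
    (hdeg : ∀ m : latticeCone σ, D (single m (1 : K)) ≠ 0 →
      ∃ (m' : latticeCone σ) (c : K),
        (m' : Fin n → ℤ) = (m : Fin n → ℤ) + e ∧ D (single m (1 : K)) = single m' c)
    (hdeg' : ∀ m : latticeCone σ, D' (single m (1 : K)) ≠ 0 →
      ∃ (m' : latticeCone σ) (c : K),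
        (m' : Fin n → ℤ) = (m : Fin n → ℤ) + e ∧ D' (single m (1 : K)) = single m' c) :
    ∃ lam : K, lam ≠ 0 ∧ D' = lam • D := by
  
  classical
  obtain ⟨C, δ, hδ, hP1, hstep, hchain⟩ := auxC (latticeCone σ) D hDne hlnd e hdeg
  obtain ⟨C', δ', hδ', hP1', hstep', hchain'⟩ := auxC (latticeCone σ) D' hD'ne hlnd' e hdeg'
  have main : ∀ (C1 C2 : (Fin n → ℤ) → K) (δ1 : K), δ1 ≠ 0 →
      (∀ v, v ∈ latticeCone σ → v + e ∈ latticeCone σ → C1 (v + e) = C1 v + δ1) →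
      (∀ v, v ∈ latticeCone σ → C1 v ≠ 0 →
        ∃ j : ℕ, (∀ i : ℕ, i ≤ j → v + i • e ∈ latticeCone σ) ∧ C1 (v + j • e) = 0) →
      (∀ m : latticeCone σ, C2 ↑m ≠ 0 → ((m : Fin n → ℤ) + e) ∈ latticeCone σ) →
      ∀ v, v ∈ latticeCone σ → C1 v = 0 → C2 v = 0 := by
    intro C1 C2 δ1 hδ1 hstep1 hchain1 hmem2 v hv h1
    by_contra h2
    have hve : v + e ∈ latticeCone σ := hmem2 ⟨v, hv⟩ h2
    have he1 : C1 (v + e) = δ1 := by rw [hstep1 v hv hve, h1, zero_add]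
    obtain ⟨j, hmem, hj0⟩ := hchain1 (v + e) hve (by rw [he1]; exact hδ1)
    have hcv := chainval (latticeCone σ) C1 δ1 e hstep1 (v + e) j hmem j (le_refl j)
    rw [hj0, he1] at hcv
    have hzz : ((j + 1 : ℕ) : K) * δ1 = 0 := by push_cast; linear_combination -hcv
    rcases mul_eq_zero.1 hzz with h | h
    · exact Nat.cast_ne_zero.mpr (Nat.succ_ne_zero j) h
    · exact hδ1 h
  have hz : ∀ v, v ∈ latticeCone σ → (C v = 0 ↔ C' v = 0) := by
    intro v hv
    constructor
    · exact main C C' δ hδ hstep hchain (fun m hm => ((hP1' m).2 hm).choose) v hv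
    · exact main C' C δ' hδ' hstep' hchain' (fun m hm => ((hP1 m).2 hm).choose) v hv
  set lam := δ' / δ with hlam
  have hlamne : lam ≠ 0 := div_ne_zero hδ' hδ
  have hCC : ∀ v, v ∈ latticeCone σ → C' v = lam * C v := by
    intro v hv
    by_cases h : C v = 0
    · rw [h, (hz v hv).1 h, mul_zero]
    · obtain ⟨j, hmem, hj0⟩ := hchain v hv h
      have h1 := chainval (latticeCone σ) C δ e hstep v j hmem j (le_refl j)
      have h2 := chainval (latticeCone σ) C' δ' e hstep' v j hmem j (le_refl j)
      rw [hj0] at h1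
      have hj0' : C' (v + j • e) = 0 := (hz _ (hmem j (le_refl j))).1 hj0
      rw [hj0'] at h2
      rw [hlam, div_mul_eq_mul_div, eq_div_iff hδ]
      linear_combination δ' * h1 - δ * h2
  have key : ∀ q : latticeCone σ, D' (single q (1:K)) = lam • D (single q (1:K)) := by
    intro q
    by_cases h : C ↑q = 0
    · have h' : C' ↑q = 0 := (hz _ q.2).1 h
      rw [(hP1 q).1 h, (hP1' q).1 h', smul_zero]
    · have h' : C' ↑q ≠ 0 := by
        rw [hCC _ q.2]
        exact mul_ne_zero hlamne h
      obtain ⟨hm, hd⟩ := (hP1 q).2 h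
      obtain ⟨hm', hd'⟩ := (hP1' q).2 h'
      rw [hd, hd', AddMonoidAlgebra.smul_single']
      congr 1
      exact hCC _ q.2
  refine ⟨lam, hlamne, ?_⟩
  apply Derivation.ext
  intro x
  induction x using AddMonoidAlgebra.induction_linear with
  | zero => simp
  | add f g hf hg => rw [map_add, map_add, hf, hg]
  | single q b =>
    have hb : (AddMonoidAlgebra.single q b : AddMonoidAlgebra K ↥(latticeCone σ)) =
        b • AddMonoidAlgebra.single q (1:K) := by
      rw [AddMonoidAlgebra.smul_single', mul_one]
    rw [hb, D'.map_smul, (lam • D).map_smul, Derivation.smul_apply, key]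
end
end

section
/- Let A be a finitely generated normal domain over an algebraically closed field K of characteristic 0 and ∂ a nonzero locally nilpotent derivation on A. Let v ∈ ker ∂ be nonzero, d > 0 an integer, and A' the integral closure (in its field of fractions) of A[u] where u^d = v. Then ∂ extends uniquely to a locally nilpotent derivation ∂' on A'. -/
open Polynomial Finset

set_option linter.unusedSectionVars false
set_option maxHeartbeats 1000000
set_option synthInstance.maxHeartbeats 1000000

section AuxIter

variable {K : Type*} [Field K] [CharZero K]
variable {S : Type*} [CommRing S] [Algebra K S] (δ : Derivation K S S)

lemma deriv_iter_zero (n : ℕ) : (⇑δ)^[n] (0 : S) = 0 := by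
  induction n with
  | zero => rfl
  | succ n ih => rw [Function.iterate_succ_apply, map_zero, ih]

lemma deriv_iter_add (a b : S) (n : ℕ) :
    (⇑δ)^[n] (a + b) = (⇑δ)^[n] a + (⇑δ)^[n] b := by
  induction n generalizing a b with
  | zero => rfl
  | succ n ih => rw [Function.iterate_succ_apply, map_add, ih,
      Function.iterate_succ_apply, Function.iterate_succ_apply]

lemma deriv_iter_smul (k : K) (a : S) (n : ℕ) :
    (⇑δ)^[n] (k • a) = k • (⇑δ)^[n] a := by
  induction n generalizing a with
  | zero => rfl
  | succ n ih => rw [Function.iterate_succ_apply, Derivation.map_smul, ih,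
      Function.iterate_succ_apply]

lemma deriv_iter_stable {a : S} {k : ℕ} (h : (⇑δ)^[k] a = 0) {n : ℕ} (hkn : k ≤ n) :
    (⇑δ)^[n] a = 0 := by
  obtain ⟨m, rfl⟩ := Nat.exists_eq_add_of_le hkn
  rw [Nat.add_comm, Function.iterate_add_apply, h, deriv_iter_zero]

lemma deriv_iter_leibniz (a b : S) (n : ℕ) :
    (⇑δ)^[n] (a * b) =
      ∑ k ∈ range (n + 1), n.choose k • ((⇑δ)^[k] a * (⇑δ)^[n - k] b) := by
  induction n with
  | zero => simp
  | succ n ih =>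
    rw [Function.iterate_succ_apply', ih, map_sum]
    have hterm : ∀ k ∈ range (n + 1),
        δ (n.choose k • ((⇑δ)^[k] a * (⇑δ)^[n - k] b)) =
        n.choose k • ((⇑δ)^[k + 1] a * (⇑δ)^[n - k] b)
          + n.choose k • ((⇑δ)^[k] a * (⇑δ)^[n - k + 1] b) := by
      intro k hk
      rw [map_nsmul, Derivation.leibniz, smul_eq_mul, smul_eq_mul,
        Function.iterate_succ_apply', Function.iterate_succ_apply', smul_add]
      ring
    rw [Finset.sum_congr rfl hterm, Finset.sum_add_distrib]
    have key : ∑ j ∈ range (n + 1 + 1), (n + 1).choose j • ((⇑δ)^[j] a * (⇑δ)^[n + 1 - j] b)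
        = (∑ k ∈ range (n + 1), n.choose k • ((⇑δ)^[k + 1] a * (⇑δ)^[n - k] b)) +
          ∑ k ∈ range (n + 1), n.choose k • ((⇑δ)^[k] a * (⇑δ)^[n - k + 1] b) := by
      rw [Finset.sum_range_succ'
        (fun j => (n + 1).choose j • ((⇑δ)^[j] a * (⇑δ)^[n + 1 - j] b)) (n + 1)]
      have step : ∀ i ∈ range (n + 1),
          (n + 1).choose (i + 1) • ((⇑δ)^[i + 1] a * (⇑δ)^[n + 1 - (i + 1)] b)
          = n.choose i • ((⇑δ)^[i + 1] a * (⇑δ)^[n - i] b)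
            + n.choose (i + 1) • ((⇑δ)^[i + 1] a * (⇑δ)^[n - i] b) := by
        intro i _
        rw [show n + 1 - (i + 1) = n - i from by omega, Nat.choose_succ_succ, add_nsmul]
      rw [Finset.sum_congr rfl step, Finset.sum_add_distrib, add_assoc]
      congr 1
      -- remaining: second sum + 0-term = S2
      have hS2 : ∑ k ∈ range (n + 1), n.choose k • ((⇑δ)^[k] a * (⇑δ)^[n - k + 1] b)
          = (∑ i ∈ range n, n.choose (i + 1) • ((⇑δ)^[i + 1] a * (⇑δ)^[n - (i + 1) + 1] b))
            + n.choose 0 • ((⇑δ)^[0] a * (⇑δ)^[n - 0 + 1] b) :=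
        Finset.sum_range_succ'
          (fun k => n.choose k • ((⇑δ)^[k] a * (⇑δ)^[n - k + 1] b)) n
      rw [hS2]
      congr 1
      · -- Σ_{i in range (n+1)} n.choose (i+1) • (δ^[i+1] a * δ^[n-i] b) = Σ_{i in range n} ...
        rw [Finset.sum_range_succ
          (fun i => n.choose (i + 1) • ((⇑δ)^[i + 1] a * (⇑δ)^[n - i] b)) n]
        rw [Nat.choose_succ_self, zero_smul, add_zero]
        refine Finset.sum_congr rfl fun i hi => ?_
        rw [mem_range] at hi
        rw [show n - (i + 1) + 1 = n - i from by omega]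
      · simp
    rw [key]


/-- `n`-th coefficient of the formal exponential `exp(t δ)` applied to `a`. -/
noncomputable def ec (a : S) (n : ℕ) : S := ((Nat.factorial n : K))⁻¹ • (⇑δ)^[n] a

lemma ec_zero (a : S) : ec δ a 0 = a := by
  simp [ec]

lemma ec_one (a : S) : ec δ a 1 = δ a := by
  simp [ec]

lemma ec_add (a b : S) (n : ℕ) : ec δ (a + b) n = ec δ a n + ec δ b n := by
  unfold ec
  rw [← smul_add]
  congr 1
  induction n generalizing a b with
  | zero => rfl
  | succ n ih => rw [Function.iterate_succ_apply, map_add, ih,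
      Function.iterate_succ_apply, Function.iterate_succ_apply]

lemma ec_succ (a : S) (n : ℕ) : ec δ (δ a) n = ((n : K) + 1) • ec δ a (n + 1) := by
  unfold ec
  rw [smul_smul, ← Function.iterate_succ_apply]
  congr 1
  rw [Nat.factorial_succ, Nat.cast_mul, mul_inv]
  push_cast
  rw [← mul_assoc, mul_inv_cancel₀ (Nat.cast_add_one_ne_zero n), one_mul]

lemma ec_mul (a b : S) (n : ℕ) :
    ec δ (a * b) n = ∑ k ∈ range (n + 1), ec δ a k * ec δ b (n - k) := by
  unfold ec
  rw [deriv_iter_leibniz, Finset.smul_sum]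
  refine Finset.sum_congr rfl fun k hk => ?_
  rw [mem_range, Nat.lt_succ_iff] at hk
  rw [smul_mul_smul_comm, ← Nat.cast_smul_eq_nsmul K, smul_smul]
  congr 1
  have h := Nat.choose_mul_factorial_mul_factorial hk
  have hk2 : ((Nat.factorial k : K)) ≠ 0 := Nat.cast_ne_zero.mpr (Nat.factorial_ne_zero k)
  have hnk2 : ((Nat.factorial (n - k) : K)) ≠ 0 :=
    Nat.cast_ne_zero.mpr (Nat.factorial_ne_zero (n - k))
  have hn2 : ((Nat.factorial n : K)) ≠ 0 := Nat.cast_ne_zero.mpr (Nat.factorial_ne_zero n)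
  have hcast : ((n.choose k : K)) * (Nat.factorial k : K) * (Nat.factorial (n - k) : K)
      = (Nat.factorial n : K) := by exact_mod_cast congrArg (Nat.cast : ℕ → K) h
  field_simp
  linear_combination hcast

lemma ec_of_deriv_zero {a : S} (h : δ a = 0) {n : ℕ} (hn : 0 < n) : ec δ a n = 0 := by
  unfold ec
  have h1 : (⇑δ)^[1] a = 0 := by simpa using h
  rw [deriv_iter_stable δ h1 hn, smul_zero]

lemma ec_one_poly {n : ℕ} (hn : 0 < n) : ec δ (1 : S) n = 0 :=
  ec_of_deriv_zero δ (Derivation.map_one_eq_zero δ) hn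

lemma ec_stable {a : S} {k : ℕ} (h : (⇑δ)^[k] a = 0) {n : ℕ} (hkn : k ≤ n) :
    ec δ a n = 0 := by
  unfold ec
  rw [deriv_iter_stable δ h hkn, smul_zero]


end AuxIter

section AuxDX
variable {K : Type*} [Field K] [CharZero K]
variable {A : Type*} [CommRing A] [Algebra K A] (D : Derivation K A A)

/-- Coefficientwise application of `D` to a polynomial. -/
noncomputable def DXf (p : Polynomial A) : Polynomial A :=
  ⟨⟨p.toFinsupp.coeff.mapRange ⇑D (map_zero D)⟩⟩

lemma DXf_coeff (p : Polynomial A) (n : ℕ) : (DXf D p).coeff n = D (p.coeff n) := rfl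

/-- The coefficientwise extension of a derivation to the polynomial ring. -/
noncomputable def DX : Derivation K (Polynomial A) (Polynomial A) where
  toFun := DXf D
  map_add' p q := by
    ext n
    simp only [DXf_coeff, coeff_add, map_add]
  map_smul' k p := by
    ext n
    simp only [DXf_coeff, coeff_smul, RingHom.id_apply, Derivation.map_smul]
  map_one_eq_zero' := by
    ext n
    simp only [LinearMap.coe_mk, AddHom.coe_mk, DXf_coeff, coeff_one, coeff_zero]
    by_cases h : n = 0 <;> simp [h]
  leibniz' p q := by
    ext n
    simp only [LinearMap.coe_mk, AddHom.coe_mk, DXf_coeff, smul_eq_mul, coeff_add, coeff_mul,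
      map_sum]
    have : ∀ x ∈ Finset.HasAntidiagonal.antidiagonal n,
        D (p.coeff x.1 * q.coeff x.2)
          = p.coeff x.1 * D (q.coeff x.2) + q.coeff x.2 * D (p.coeff x.1) := by
      intro x _
      rw [Derivation.leibniz, smul_eq_mul, smul_eq_mul]
    rw [Finset.sum_congr rfl this, Finset.sum_add_distrib]
    congr 1
    have hsw := Finset.Nat.sum_antidiagonal_swap (n := n)
        (f := fun x : ℕ × ℕ => q.coeff x.1 * D (p.coeff x.2))
    simp only [Prod.fst_swap, Prod.snd_swap] at hsw
    rw [← hsw]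

lemma DX_apply (p : Polynomial A) (n : ℕ) : (DX D p).coeff n = D (p.coeff n) := rfl

lemma DX_iter_coeff (p : Polynomial A) (m n : ℕ) :
    ((⇑(DX D))^[m] p).coeff n = (⇑D)^[m] (p.coeff n) := by
  induction m generalizing p with
  | zero => rfl
  | succ m ih =>
    rw [Function.iterate_succ_apply, Function.iterate_succ_apply, ih, DX_apply]

end AuxDX

section Main
variable {K A B : Type*} [Field K] [CharZero K]
    [CommRing A] [IsDomain A] [Algebra K A]
    [CommRing B] [IsDomain B] [Algebra K B] [Algebra A B] [IsScalarTower K A B]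
    (D : Derivation K A A) (u : B)

lemma aeval_smulK (k : K) (p : Polynomial A) :
    aeval u (k • p) = k • aeval u p := by
  rw [Algebra.smul_def, map_mul, Algebra.smul_def]
  congr 1
  rw [Polynomial.algebraMap_apply, aeval_C, ← IsScalarTower.algebraMap_apply]

/-- coefficients of `exp(t·D)` applied to `p`, evaluated at `u`. -/
noncomputable def ecB (p : Polynomial A) (n : ℕ) : B := aeval u (ec (DX D) p n)

lemma ecB_zero (p : Polynomial A) : ecB D u p 0 = aeval u p := by
  rw [ecB, ec_zero]

lemma ecB_one (p : Polynomial A) : ecB D u p 1 = aeval u (DX D p) := by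
  rw [ecB, ec_one]

lemma ecB_vanish (hlnd : IsLND D) (p : Polynomial A) :
    ∃ k, ∀ n, k ≤ n → ecB D u p n = 0 := by
  have hDX : ∃ k, (⇑(DX (K := K) D))^[k] p = 0 := by
    refine ⟨p.support.sup fun i => (hlnd (p.coeff i)).choose, ?_⟩
    ext n
    rw [DX_iter_coeff, Polynomial.coeff_zero]
    by_cases hn : n ∈ p.support
    · exact deriv_iter_stable D (hlnd (p.coeff n)).choose_spec
        (Finset.le_sup (f := fun i => (hlnd (p.coeff i)).choose) hn)
    · rw [Polynomial.notMem_support_iff.mp hn, deriv_iter_zero]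
  obtain ⟨k, hk⟩ := hDX
  exact ⟨k, fun n hn => by rw [ecB, ec_stable _ hk hn, map_zero]⟩

variable (hlnd : IsLND D)

/-- The "exponential" polynomial `∑ ecB p n · t^n`. -/
noncomputable def EP (p : Polynomial A) : Polynomial B :=
  ∑ n ∈ Finset.range (ecB_vanish D u hlnd p).choose, C (ecB D u p n) * X ^ n

lemma EP_coeff (p : Polynomial A) (n : ℕ) :
    (EP D u hlnd p).coeff n = ecB D u p n := by
  rw [EP, finset_sum_coeff]
  simp only [coeff_C_mul, coeff_X_pow, mul_ite, mul_one, mul_zero]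
  have conv1 : ∀ m ∈ Finset.range (ecB_vanish D u hlnd p).choose,
      (if n = m then ecB D u p m else 0) = if m = n then ecB D u p m else 0 := by
    intro m _
    by_cases h : m = n
    · rw [if_pos h, if_pos h.symm]
    · rw [if_neg h, if_neg (fun hh => h hh.symm)]
  rw [Finset.sum_congr rfl conv1,
    Finset.sum_ite_eq' (Finset.range _) n (fun m => ecB D u p m)]
  by_cases h : n ∈ Finset.range (ecB_vanish D u hlnd p).choose
  · rw [if_pos h]
  · rw [if_neg h, eq_comm]
    exact (ecB_vanish D u hlnd p).choose_spec n (by simpa using h)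

lemma EP_add (p q : Polynomial A) :
    EP D u hlnd (p + q) = EP D u hlnd p + EP D u hlnd q := by
  ext n
  rw [coeff_add, EP_coeff, EP_coeff, EP_coeff, ecB, ecB, ecB, ec_add, map_add]

lemma EP_mul (p q : Polynomial A) :
    EP D u hlnd (p * q) = EP D u hlnd p * EP D u hlnd q := by
  ext n
  rw [EP_coeff, coeff_mul]
  have : ∀ x ∈ Finset.HasAntidiagonal.antidiagonal n, (EP D u hlnd p).coeff x.1 * (EP D u hlnd q).coeff x.2
      = ecB D u p x.1 * ecB D u q x.2 := fun x _ => by rw [EP_coeff, EP_coeff]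
  rw [Finset.sum_congr rfl this,
    Finset.Nat.sum_antidiagonal_eq_sum_range_succ (fun i j => ecB D u p i * ecB D u q j)]
  rw [ecB, ec_mul, map_sum]
  exact Finset.sum_congr rfl fun k _ => by rw [map_mul, ecB, ecB]

lemma EP_one : EP D u hlnd 1 = 1 := by
  ext n
  rw [EP_coeff, coeff_one]
  rcases Nat.eq_zero_or_pos n with rfl | hn
  · rw [if_pos rfl, ecB_zero, map_one]
  · rw [if_neg (by omega), ecB, ec_one_poly _ hn, map_zero]

lemma EP_coeff_zero (p : Polynomial A) : (EP D u hlnd p).coeff 0 = aeval u p := by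
  rw [EP_coeff, ecB_zero]

lemma DX_C (a : A) : DX (K := K) D (C a) = C (D a) := by
  ext n
  rw [DX_apply, coeff_C, coeff_C]
  by_cases h : n = 0 <;> simp [h]

lemma DX_X : DX (K := K) D X = 0 := by
  ext n
  rw [DX_apply, coeff_X, coeff_zero]
  by_cases h : (1 : ℕ) = n <;> simp [h]

lemma EP_C_of_ker {a : A} (ha : D a = 0) :
    EP D u hlnd (C a) = C (algebraMap A B a) := by
  ext n
  rw [EP_coeff, coeff_C]
  rcases Nat.eq_zero_or_pos n with rfl | hn
  · rw [if_pos rfl, ecB_zero, aeval_C]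
  · rw [if_neg (by omega), ecB, ec_of_deriv_zero _ (by rw [DX_C, ha, map_zero]) hn, map_zero]

end Main

section Dagger
variable {K A B : Type*} [Field K] [CharZero K]
    [CommRing A] [IsDomain A] [Algebra K A]
    [CommRing B] [IsDomain B] [Algebra K B] [Algebra A B] [IsScalarTower K A B]
    (D : Derivation K A A) {u : B}

lemma dagger (hAnorm : IsIntegrallyClosed A)
    (hinj : Function.Injective (algebraMap A B))
    {v : A} (hv : v ≠ 0) (hker : D v = 0)
    {d : ℕ} (hd : 0 < d) (hu : u ^ d = algebraMap A B v)
    (hBint : ∀ b : B, IsIntegral A b) :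
    ∀ p : Polynomial A, aeval u p = 0 → aeval u (DX D p) = 0 := by
  haveI := hAnorm
  haveI : Module.IsTorsionFree A B := Module.isTorsionFree_iff_algebraMap_injective.mpr hinj
  haveI : CharZero B := charZero_of_injective_algebraMap (algebraMap K B).injective
  have hu0 : u ≠ 0 := by
    intro h
    apply hv
    apply hinj
    rw [map_zero, ← hu, h, zero_pow hd.ne']
  -- the minimal polynomial
  set m := minpoly A u with hm
  have hmint : IsIntegral A u := hBint u
  have haevalf : aeval u (X ^ d - C v : Polynomial A) = 0 := by
    rw [map_sub, map_pow, aeval_X, aeval_C, hu, sub_self]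
  obtain ⟨g, hg⟩ : m ∣ (X ^ d - C v : Polynomial A) :=
    minpoly.isIntegrallyClosed_dvd hmint haevalf
  have hgu : aeval u g ≠ 0 := by
    have hder : aeval u (derivative (X ^ d - C v : Polynomial A)) = d * u ^ (d - 1) := by
      rw [map_sub, derivative_C, sub_zero, derivative_X_pow, map_mul, aeval_C, map_pow, aeval_X]
      rw [map_natCast]
    have hne : aeval u (derivative (X ^ d - C v : Polynomial A)) ≠ 0 := by
      rw [hder]
      exact mul_ne_zero (Nat.cast_ne_zero.mpr hd.ne') (pow_ne_zero _ hu0)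
    intro h0
    apply hne
    rw [hg, derivative_mul, map_add, map_mul, map_mul, h0, mul_zero, zero_add,
      minpoly.aeval, zero_mul]
  -- D applied to the coefficients of X^d - C v is zero
  have hDXf : DX D (X ^ d - C v : Polynomial A) = 0 := by
    rw [map_sub, DX_C, hker, map_zero, sub_zero]
    ext n
    rw [DX_apply, coeff_X_pow, coeff_zero]
    by_cases h : n = d <;> simp [h]
  have hkey : aeval u (DX D m) = 0 := by
    have h0 : (0 : Polynomial A) = DX D m * g + m * DX D g := by
      have := Derivation.leibniz (DX D) m g
      rw [smul_eq_mul, smul_eq_mul, ← hg, hDXf] at this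
      linear_combination this
    have := congrArg (aeval u) h0
    rw [map_zero, map_add, map_mul, map_mul, minpoly.aeval, zero_mul, add_zero] at this
    exact (mul_eq_zero.mp this.symm).resolve_right hgu
  intro p hp
  obtain ⟨h, hh⟩ : m ∣ p := minpoly.isIntegrallyClosed_dvd hmint hp
  have := Derivation.leibniz (DX D) m h
  rw [smul_eq_mul, smul_eq_mul] at this
  rw [hh, this, map_add, map_mul, map_mul, minpoly.aeval, zero_mul, zero_add, hkey, mul_zero]

lemma dagger_iter (hAnorm : IsIntegrallyClosed A)
    (hinj : Function.Injective (algebraMap A B))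
    {v : A} (hv : v ≠ 0) (hker : D v = 0)
    {d : ℕ} (hd : 0 < d) (hu : u ^ d = algebraMap A B v)
    (hBint : ∀ b : B, IsIntegral A b) (n : ℕ) :
    ∀ p : Polynomial A, aeval u p = 0 → aeval u ((⇑(DX (K := K) D))^[n] p) = 0 := by
  induction n with
  | zero => exact fun p hp => hp
  | succ n ih =>
    intro p hp
    rw [Function.iterate_succ_apply]
    exact ih _ (dagger D hAnorm hinj hv hker hd hu hBint p hp)

lemma EP_of_aeval_zero (hlnd : IsLND D) (hAnorm : IsIntegrallyClosed A)
    (hinj : Function.Injective (algebraMap A B))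
    {v : A} (hv : v ≠ 0) (hker : D v = 0)
    {d : ℕ} (hd : 0 < d) (hu : u ^ d = algebraMap A B v)
    (hBint : ∀ b : B, IsIntegral A b)
    {p : Polynomial A} (hp : aeval u p = 0) : EP D u hlnd p = 0 := by
  ext n
  rw [EP_coeff, coeff_zero, ecB]
  show aeval u (((Nat.factorial n : K))⁻¹ • (⇑(DX (K := K) D))^[n] p) = 0
  rw [aeval_smulK, dagger_iter D hAnorm hinj hv hker hd hu hBint n p hp, smul_zero]

/-- `derivative (EP p) = EP (DX p)`. -/
lemma EP_derivative (hlnd : IsLND D) (p : Polynomial A) :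
    derivative (EP D u hlnd p) = EP D u hlnd (DX D p) := by
  ext n
  rw [coeff_derivative, EP_coeff, EP_coeff, ecB, ecB, ec_succ, aeval_smulK, Algebra.smul_def,
    map_add, map_one, map_natCast]
  ring

end Dagger

section Kaplansky
variable {R L : Type*} [CommRing R] [IsDomain R] [Field L] [Algebra R L]

lemma coeffs_integral {Q : Polynomial L} {m : ℕ} (hm : m ≠ 0) (c : ℕ → Polynomial R)
    (hrel : Q ^ m + ∑ i ∈ Finset.range m, ((c i).map (algebraMap R L)) * Q ^ i = 0) :
    ∀ n, IsIntegral R (Q.coeff n) := by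
  set N := max (Q.natDegree + 1) (((Finset.range m).sup fun i => (c i).natDegree) + 1) with hN
  have hNQ : Q.natDegree < N := lt_of_lt_of_le (Nat.lt_succ_self _) (le_max_left _ _)
  have hNc : ∀ i, i < m → (c i).natDegree < N := fun i hi =>
    lt_of_le_of_lt (Finset.le_sup (f := fun i => (c i).natDegree) (Finset.mem_range.mpr hi))
      (lt_of_lt_of_le (Nat.lt_succ_self _) (le_max_right _ _))
  have hNpos : 0 < N := lt_of_le_of_lt (Nat.zero_le _) hNQ
  set G : Polynomial L := X ^ N - Q with hG
  have hdegQ : Q.degree < (N : WithBot ℕ) :=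
    lt_of_le_of_lt (degree_le_natDegree) (by exact_mod_cast hNQ)
  have hGmonic : G.Monic := monic_X_pow_sub hdegQ
  set p2 : Polynomial (Polynomial L) :=
    X ^ m + ∑ i ∈ Finset.range m, C ((c i).map (algebraMap R L)) * X ^ i with hp2
  have heval : p2.eval Q = 0 := by
    rw [hp2, eval_add, eval_pow, eval_X, eval_finset_sum]
    rw [← hrel]
    congr 1
    exact Finset.sum_congr rfl fun i _ => by rw [eval_mul, eval_C, eval_pow, eval_X]
  have hdvd : G ∣ p2.eval (X ^ N) := by
    have h := sub_dvd_eval_sub (X ^ N) Q p2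
    rw [heval, sub_zero] at h
    exact h
  set f : Polynomial R := X ^ (N * m) + ∑ i ∈ Finset.range m, (c i) * X ^ (N * i) with hf
  have hfmonic : f.Monic := by
    apply monic_X_pow_add
    apply lt_of_le_of_lt (degree_sum_le _ _)
    refine (Finset.sup_lt_iff (by exact WithBot.bot_lt_coe _)).mpr fun i hi => ?_
    rw [Finset.mem_range] at hi
    calc ((c i) * X ^ (N * i)).degree ≤ (c i).degree + (N * i : ℕ) :=
          (degree_mul_le _ _).trans (by rw [degree_X_pow])
      _ ≤ ((c i).natDegree : WithBot ℕ) + (N * i : ℕ) := by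
          gcongr
          exact degree_le_natDegree
      _ < ((N * m : ℕ) : WithBot ℕ) := by
          rw [← Nat.cast_add, Nat.cast_lt]
          have h1 : (c i).natDegree + N * i < N + N * i := by
            have := hNc i hi
            omega
          have h2 : N + N * i = N * (i + 1) := by ring
          have h3 : N * (i + 1) ≤ N * m := Nat.mul_le_mul_left N (by omega)
          omega
  have hfmap : f.map (algebraMap R L) = p2.eval (X ^ N) := by
    rw [hf, hp2, Polynomial.map_add, Polynomial.map_pow, Polynomial.map_X,
      eval_add, eval_pow, eval_X, ← pow_mul, Polynomial.map_sum, eval_finset_sum]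
    congr 1
    refine Finset.sum_congr rfl fun i _ => ?_
    rw [Polynomial.map_mul, Polynomial.map_pow, Polynomial.map_X, eval_mul, eval_C,
      eval_pow, eval_X, ← pow_mul]
  have hlift := integralClosure.mem_lifts_of_monic_of_dvd_map (K := L)
    hfmonic hGmonic (by rw [hfmap]; exact hdvd)
  rw [lifts_iff_coeff_lifts] at hlift
  intro n
  have hGint : IsIntegral R (G.coeff n) := by
    obtain ⟨w, hw⟩ := hlift n
    rw [← hw]
    exact w.2
  have hXint : IsIntegral R ((X ^ N : Polynomial L).coeff n) := by
    rw [coeff_X_pow]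
    by_cases h : n = N <;> simp [h, isIntegral_one, isIntegral_zero]
  have : Q.coeff n = (X ^ N : Polynomial L).coeff n - G.coeff n := by
    rw [hG, coeff_sub]
    ring
  rw [this]
  exact hXint.sub hGint

end Kaplansky

section MoreEP
variable {K A B : Type*} [Field K] [CharZero K]
    [CommRing A] [IsDomain A] [Algebra K A]
    [CommRing B] [IsDomain B] [Algebra K B] [Algebra A B] [IsScalarTower K A B]
    (D : Derivation K A A) (u : B) (hlnd : IsLND D)

lemma EP_zero : EP D u hlnd 0 = 0 := by
  ext n
  rw [EP_coeff, coeff_zero, ecB]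
  have : ec (DX (K := K) D) 0 n = 0 := by
    unfold ec
    rw [deriv_iter_zero, smul_zero]
  rw [this, map_zero]

lemma EP_pow (p : Polynomial A) (k : ℕ) :
    EP D u hlnd (p ^ k) = EP D u hlnd p ^ k := by
  induction k with
  | zero => rw [pow_zero, pow_zero, EP_one]
  | succ k ih => rw [pow_succ, pow_succ, EP_mul, ih]

lemma EP_sum (s : Finset ℕ) (g : ℕ → Polynomial A) :
    EP D u hlnd (∑ i ∈ s, g i) = ∑ i ∈ s, EP D u hlnd (g i) := by
  classical
  induction s using Finset.induction_on with
  | empty => rw [Finset.sum_empty, Finset.sum_empty, EP_zero]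
  | insert _ _ hni ih =>
    rw [Finset.sum_insert hni, Finset.sum_insert hni, EP_add, ih]

lemma EP_sub (p q : Polynomial A) :
    EP D u hlnd (p - q) = EP D u hlnd p - EP D u hlnd q := by
  have h := EP_add D u hlnd (p - q) q
  rw [sub_add_cancel] at h
  linear_combination -h

lemma EP_ne_zero {q : Polynomial A} (hq : aeval u q ≠ 0) : EP D u hlnd q ≠ 0 := by
  intro h
  apply hq
  rw [← EP_coeff_zero D u hlnd q, h, coeff_zero]

end MoreEP

section ExistsPb
variable {K A B : Type*} [Field K] [CharZero K]
    [CommRing A] [IsDomain A] [Algebra K A]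
    [CommRing B] [IsDomain B] [Algebra K B] [Algebra A B] [IsScalarTower K A B]
    (D : Derivation K A A) {u : B} (hlnd : IsLND D)
    (hAnorm : IsIntegrallyClosed A)
    (hinj : Function.Injective (algebraMap A B))
    {v : A} (hv : v ≠ 0) (hker : D v = 0)
    {d : ℕ} (hd : 0 < d) (hu : u ^ d = algebraMap A B v)
    (hBint : ∀ b : B, IsIntegral A b)
    (hBnorm : IsIntegrallyClosed B)

include hlnd hAnorm hinj hv hker hd hu hBint hBnorm in
lemma exists_Pb (b : B) (p q : Polynomial A)
    (hq : aeval u q ≠ 0) (hb : aeval u q * b = aeval u p) :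
    ∃ P : Polynomial B, P * EP D u hlnd q = EP D u hlnd p := by
  haveI := hBnorm
  classical
  set L := FractionRing B with hL
  have hBL : Function.Injective (algebraMap B L) := IsFractionRing.injective B L
  set FR := FractionRing (Polynomial L) with hFR
  set ψ : Polynomial B →+* Polynomial L := mapRingHom (algebraMap B L) with hψ
  have hψinj : Function.Injective ψ := Polynomial.map_injective _ hBL
  set χ : Polynomial L →+* FR := (algebraMap (Polynomial L) FR) with hχ
  have hχinj : Function.Injective χ := IsFractionRing.injective (Polynomial L) FR
  set φ : Polynomial B →+* FR := χ.comp ψ with hφ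
  obtain ⟨f, hfmonic, hfeval⟩ := hBint b
  set n := f.natDegree with hn
  have hn0 : n ≠ 0 := by
    intro h
    have : f = 1 := (Polynomial.Monic.natDegree_eq_zero hfmonic).mp h
    rw [this] at hfeval
    simp at hfeval
  set EPp := EP D u hlnd p with hEPp
  set EPq := EP D u hlnd q with hEPq
  set EA : ℕ → Polynomial B := fun i => EP D u hlnd (C (f.coeff i)) with hEA
  -- the homogenized relation
  have hhomog : aeval u (∑ i ∈ Finset.range (n + 1), C (f.coeff i) * p ^ i * q ^ (n - i)) = 0 := by
    rw [map_sum]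
    have hterm : ∀ i ∈ Finset.range (n + 1),
        aeval u (C (f.coeff i) * p ^ i * q ^ (n - i))
          = (aeval u q) ^ n * (algebraMap A B (f.coeff i) * b ^ i) := by
      intro i hi
      rw [Finset.mem_range, Nat.lt_succ_iff] at hi
      rw [map_mul, map_mul, aeval_C, map_pow, map_pow, ← hb, mul_pow]
      have hpow : (aeval u q) ^ i * (aeval u q) ^ (n - i) = (aeval u q) ^ n := by
        rw [← pow_add]
        congr 1
        omega
      rw [← hpow]
      ring
    rw [Finset.sum_congr rfl hterm, ← Finset.mul_sum]
    have : ∑ i ∈ Finset.range (n + 1), algebraMap A B (f.coeff i) * b ^ i = 0 := by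
      rw [← Polynomial.eval₂_eq_sum_range, hfeval]
    rw [this, mul_zero]
  -- its EP image
  have hEPrel : ∑ i ∈ Finset.range (n + 1), EA i * EPp ^ i * EPq ^ (n - i) = 0 := by
    have h1 := EP_of_aeval_zero D hlnd hAnorm hinj hv hker hd hu hBint hhomog
    rw [EP_sum] at h1
    rw [← h1]
    exact Finset.sum_congr rfl fun i _ => by rw [EP_mul, EP_mul, EP_pow, EP_pow]
  have hEAn : EA n = 1 := by
    have hc : f.coeff n = 1 := hfmonic
    show EP D u hlnd (C (f.coeff n)) = 1
    rw [hc, map_one, EP_one]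
  have hEPq0 : EPq ≠ 0 := EP_ne_zero D u hlnd hq
  have hφinj : Function.Injective φ := by
    rw [hφ, RingHom.coe_comp]
    exact hχinj.comp hψinj
  have hφq : φ EPq ≠ 0 := fun h => hEPq0 (hφinj (by rw [h, map_zero]))
  set z : FR := φ EPp / φ EPq with hz
  -- the monic relation for z over L[X]
  have hzrel : ∑ i ∈ Finset.range (n + 1), χ (ψ (EA i)) * z ^ i = 0 := by
    have hmul : (∑ i ∈ Finset.range (n + 1), χ (ψ (EA i)) * z ^ i) * (φ EPq) ^ n = 0 := by
      have hterm : ∀ i ∈ Finset.range (n + 1),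
          χ (ψ (EA i)) * z ^ i * (φ EPq) ^ n = φ (EA i * EPp ^ i * EPq ^ (n - i)) := by
        intro i hi
        rw [Finset.mem_range, Nat.lt_succ_iff] at hi
        rw [hz, div_pow, map_mul, map_mul, map_pow, map_pow]
        rw [show (n : ℕ) = i + (n - i) from by omega, pow_add (φ EPq)]
        rw [Nat.add_sub_cancel_left, mul_assoc, ← mul_assoc (φ EPp ^ i / φ EPq ^ i),
          div_mul_cancel₀ _ (pow_ne_zero _ hφq)]
        have hcomp : φ (EA i) = χ (ψ (EA i)) := rfl
        rw [hcomp]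
        ring
      rw [Finset.sum_mul, Finset.sum_congr rfl hterm, ← map_sum, hEPrel, map_zero]
    rcases mul_eq_zero.mp hmul with h | h
    · exact h
    · exact absurd (pow_eq_zero_iff hn0 |>.mp h) hφq
  have hzint : IsIntegral (Polynomial L) z := by
    refine ⟨X ^ n + ∑ i ∈ Finset.range n, C (ψ (EA i)) * X ^ i, ?_, ?_⟩
    · apply monic_X_pow_add
      apply lt_of_le_of_lt (degree_sum_le _ _)
      refine (Finset.sup_lt_iff (by exact WithBot.bot_lt_coe _)).mpr fun i hi => ?_
      rw [Finset.mem_range] at hi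
      calc (C (ψ (EA i)) * X ^ i).degree ≤ (C (ψ (EA i))).degree + (i : ℕ) :=
            (degree_mul_le _ _).trans (by rw [degree_X_pow])
        _ ≤ (0 : WithBot ℕ) + (i : ℕ) := by gcongr; exact degree_C_le
        _ < (n : WithBot ℕ) := by
            rw [zero_add, Nat.cast_lt]
            exact hi
    · rw [eval₂_add, eval₂_pow, eval₂_X, eval₂_finset_sum]
      have : ∀ i ∈ Finset.range n, eval₂ (algebraMap (Polynomial L) FR) z (C (ψ (EA i)) * X ^ i)
          = χ (ψ (EA i)) * z ^ i := by
        intro i _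
        rw [eval₂_mul, eval₂_C, eval₂_pow, eval₂_X]
      rw [Finset.sum_congr rfl this]
      have hsplit := Finset.sum_range_succ (fun i => χ (ψ (EA i)) * z ^ i) n
      rw [hsplit, hEAn, map_one, map_one, one_mul, add_comm] at hzrel
      exact hzrel
  obtain ⟨Qz, hQz⟩ := IsIntegrallyClosed.isIntegral_iff.mp hzint
  have hQzq : Qz * ψ EPq = ψ EPp := by
    apply hχinj
    rw [map_mul, hQz]
    show z * φ EPq = φ EPp
    rw [hz, div_mul_cancel₀ _ hφq]
  -- the relation for Qz over L[X], with coefficients images of B[X]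
  have hQzrel : Qz ^ n + ∑ i ∈ Finset.range n, Polynomial.map (algebraMap B L) (EA i) * Qz ^ i
      = 0 := by
    apply hχinj
    rw [map_add, map_pow, map_sum, map_zero, hQz]
    have : ∀ i ∈ Finset.range n, χ (Polynomial.map (algebraMap B L) (EA i) * Qz ^ i)
        = χ (ψ (EA i)) * z ^ i := by
      intro i _
      rw [map_mul, map_pow, hQz]
      rfl
    rw [Finset.sum_congr rfl this]
    have hsplit := Finset.sum_range_succ (fun i => χ (ψ (EA i)) * z ^ i) n
    rw [hsplit, hEAn, map_one, map_one, one_mul, add_comm] at hzrel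
    exact hzrel
  have hcoeffs : ∀ j, IsIntegral B (Qz.coeff j) := coeffs_integral hn0 (fun i => EA i) hQzrel
  have hrange : ∀ j, Qz.coeff j ∈ Set.range (algebraMap B L) := by
    intro j
    obtain ⟨w, hw⟩ := IsIntegrallyClosed.isIntegral_iff.mp (hcoeffs j)
    exact ⟨w, hw⟩
  obtain ⟨P, hP⟩ := (Polynomial.mem_lifts Qz).mp ((Polynomial.lifts_iff_coeff_lifts Qz).mpr hrange)
  refine ⟨P, hψinj ?_⟩
  rw [map_mul]
  show Polynomial.map (algebraMap B L) P * ψ EPq = ψ EPp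
  rw [hP, hQzq]

include hlnd hAnorm hinj hv hker hd hu hBint in
lemma EP_congr {r s : Polynomial A} (h : aeval u r = aeval u s) :
    EP D u hlnd r = EP D u hlnd s := by
  have h0 : EP D u hlnd (r - s) = 0 :=
    EP_of_aeval_zero D hlnd hAnorm hinj hv hker hd hu hBint (by rw [map_sub, h, sub_self])
  rw [EP_sub] at h0
  linear_combination h0

end ExistsPb

theorem stmt14' {K A B : Type*} [Field K] [CharZero K]
    [CommRing A] [IsDomain A] [Algebra K A]
    (hAnorm : IsIntegrallyClosed A)
    [CommRing B] [IsDomain B] [Algebra K B] [Algebra A B] [IsScalarTower K A B]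
    (hinj : Function.Injective (algebraMap A B))
    (D : Derivation K A A) (hlnd : IsLND D)
    (v : A) (hv : v ≠ 0) (hker : D v = 0)
    (d : ℕ) (hd : 0 < d) (u : B) (hu : u ^ d = algebraMap A B v)
    (hBint : ∀ b : B, IsIntegral A b)
    (hBnorm : IsIntegrallyClosed B)
    (hBfrac : ∀ b : B, ∃ x ∈ Algebra.adjoin A ({u} : Set B),
      ∃ y ∈ Algebra.adjoin A ({u} : Set B), y ≠ 0 ∧ y * b = x) :
    ∃ D' : Derivation K B B,
      (∀ a : A, D' (algebraMap A B a) = algebraMap A B (D a)) ∧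
      IsLND D' ∧
      ∀ D'' : Derivation K B B,
        (∀ a : A, D'' (algebraMap A B a) = algebraMap A B (D a)) → D'' = D' := by
  classical
  haveI : CharZero B := charZero_of_injective_algebraMap (algebraMap K B).injective
  -- representations of elements of B as fractions from A[u]
  have hrep : ∀ b : B, ∃ pq : Polynomial A × Polynomial A,
      aeval u pq.2 ≠ 0 ∧ aeval u pq.2 * b = aeval u pq.1 := by
    intro b
    obtain ⟨x, hx, y, hy, hy0, hxy⟩ := hBfrac b
    rw [Algebra.adjoin_singleton_eq_range_aeval, AlgHom.mem_range] at hx hy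
    obtain ⟨p, hp⟩ := hx
    obtain ⟨q, hq⟩ := hy
    exact ⟨(p, q), by rw [hq]; exact hy0, by rw [hp, hq]; exact hxy⟩
  choose rep hq0 hb0 using hrep
  -- the exponential polynomial attached to each b
  have hPb : ∀ b : B, ∃ P : Polynomial B, ∀ p q : Polynomial A,
      aeval u q ≠ 0 → aeval u q * b = aeval u p →
      P * EP D u hlnd q = EP D u hlnd p := by
    intro b
    obtain ⟨P, hP⟩ := exists_Pb D hlnd hAnorm hinj hv hker hd hu hBint hBnorm b
      (rep b).1 (rep b).2 (hq0 b) (hb0 b)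
    refine ⟨P, fun p q hq hb => ?_⟩
    have hEPq : EP D u hlnd q ≠ 0 := EP_ne_zero D u hlnd hq
    have hEPq0 : EP D u hlnd (rep b).2 ≠ 0 := EP_ne_zero D u hlnd (hq0 b)
    apply mul_right_cancel₀ hEPq0
    calc P * EP D u hlnd q * EP D u hlnd (rep b).2
        = (P * EP D u hlnd (rep b).2) * EP D u hlnd q := by ring
      _ = EP D u hlnd (rep b).1 * EP D u hlnd q := by rw [hP]
      _ = EP D u hlnd ((rep b).1 * q) := by rw [EP_mul]
      _ = EP D u hlnd (p * (rep b).2) := by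
          apply EP_congr D hlnd hAnorm hinj hv hker hd hu hBint
          rw [map_mul, map_mul, ← hb, ← hb0 b]
          ring
      _ = EP D u hlnd p * EP D u hlnd (rep b).2 := by rw [EP_mul]
  choose Pb hPb using hPb
  have hPq : ∀ b, Pb b * EP D u hlnd (rep b).2 = EP D u hlnd (rep b).1 :=
    fun b => hPb b _ _ (hq0 b) (hb0 b)
  -- coefficient zero recovers b
  have hcoeff0 : ∀ b, (Pb b).coeff 0 = b := by
    intro b
    have h := congrArg (fun P => P.coeff 0) (hPq b)
    simp only [mul_coeff_zero, EP_coeff_zero] at h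
    have h2 : aeval u (rep b).2 * (Pb b).coeff 0 = aeval u (rep b).2 * b := by
      rw [mul_comm (aeval u (rep b).2) ((Pb b).coeff 0), h, hb0 b]
    exact mul_left_cancel₀ (hq0 b) h2
  -- multiplicativity and additivity of Pb
  have hmul : ∀ b c, Pb (b * c) = Pb b * Pb c := by
    intro b c
    have hq : aeval u ((rep b).2 * (rep c).2) ≠ 0 := by
      rw [map_mul]; exact mul_ne_zero (hq0 b) (hq0 c)
    have hbc : aeval u ((rep b).2 * (rep c).2) * (b * c) = aeval u ((rep b).1 * (rep c).1) := by
      rw [map_mul, map_mul, ← hb0 b, ← hb0 c]; ring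
    have h := hPb (b * c) _ _ hq hbc
    rw [EP_mul, EP_mul] at h
    have hcancel : EP D u hlnd (rep b).2 * EP D u hlnd (rep c).2 ≠ 0 :=
      mul_ne_zero (EP_ne_zero D u hlnd (hq0 b)) (EP_ne_zero D u hlnd (hq0 c))
    apply mul_right_cancel₀ hcancel
    rw [h]
    calc EP D u hlnd (rep b).1 * EP D u hlnd (rep c).1
        = (Pb b * EP D u hlnd (rep b).2) * (Pb c * EP D u hlnd (rep c).2) := by
          rw [hPq b, hPq c]
      _ = Pb b * Pb c * (EP D u hlnd (rep b).2 * EP D u hlnd (rep c).2) := by ring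
  have hadd : ∀ b c, Pb (b + c) = Pb b + Pb c := by
    intro b c
    have hq : aeval u ((rep b).2 * (rep c).2) ≠ 0 := by
      rw [map_mul]; exact mul_ne_zero (hq0 b) (hq0 c)
    have hbc : aeval u ((rep b).2 * (rep c).2) * (b + c)
        = aeval u ((rep b).1 * (rep c).2 + (rep c).1 * (rep b).2) := by
      rw [map_mul, map_add, map_mul, map_mul, ← hb0 b, ← hb0 c]; ring
    have h := hPb (b + c) _ _ hq hbc
    rw [EP_mul, EP_add, EP_mul, EP_mul] at h
    have hcancel : EP D u hlnd (rep b).2 * EP D u hlnd (rep c).2 ≠ 0 :=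
      mul_ne_zero (EP_ne_zero D u hlnd (hq0 b)) (EP_ne_zero D u hlnd (hq0 c))
    apply mul_right_cancel₀ hcancel
    rw [h]
    calc EP D u hlnd (rep b).1 * EP D u hlnd (rep c).2
          + EP D u hlnd (rep c).1 * EP D u hlnd (rep b).2
        = (Pb b * EP D u hlnd (rep b).2) * EP D u hlnd (rep c).2
          + (Pb c * EP D u hlnd (rep c).2) * EP D u hlnd (rep b).2 := by rw [hPq b, hPq c]
      _ = (Pb b + Pb c) * (EP D u hlnd (rep b).2 * EP D u hlnd (rep c).2) := by ring
  have hone : ∀ p : Polynomial A, Pb (aeval u p) = EP D u hlnd p := by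
    intro p
    have h := hPb (aeval u p) p 1 (by rw [map_one]; exact one_ne_zero)
      (by rw [map_one, one_mul])
    rwa [EP_one, mul_one] at h
  have halgA : ∀ a : A, Pb (algebraMap A B a) = EP D u hlnd (C a) := by
    intro a
    have := hone (C a)
    rwa [aeval_C] at this
  have halgK : ∀ k : K, Pb (algebraMap K B k) = C (algebraMap K B k) := by
    intro k
    have h1 : algebraMap K B k = algebraMap A B (algebraMap K A k) :=
      IsScalarTower.algebraMap_apply K A B k
    rw [h1, halgA, EP_C_of_ker D u hlnd (Derivation.map_algebraMap D k)]
  -- the candidate derivation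
  have hc1 : ∀ f g : Polynomial B, (f * g).coeff 1
      = f.coeff 0 * g.coeff 1 + f.coeff 1 * g.coeff 0 := by
    intro f g
    rw [coeff_mul, Finset.Nat.sum_antidiagonal_eq_sum_range_succ
      (fun i j => f.coeff i * g.coeff j), Finset.sum_range_succ, Finset.sum_range_succ,
      Finset.sum_range_zero]
    norm_num
  set D'f : B → B := fun b => (Pb b).coeff 1 with hD'f
  have hD'add : ∀ b c, D'f (b + c) = D'f b + D'f c := by
    intro b c
    show (Pb (b + c)).coeff 1 = (Pb b).coeff 1 + (Pb c).coeff 1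
    rw [hadd, coeff_add]
  have hD'smul : ∀ (k : K) (b : B), D'f (k • b) = k • D'f b := by
    intro k b
    show (Pb (k • b)).coeff 1 = k • (Pb b).coeff 1
    rw [Algebra.smul_def, hmul, halgK, coeff_C_mul, Algebra.smul_def]
  have hD'leib : ∀ b c, D'f (b * c) = b * D'f c + c * D'f b := by
    intro b c
    show (Pb (b * c)).coeff 1 = b * (Pb c).coeff 1 + c * (Pb b).coeff 1
    rw [hmul, hc1, hcoeff0, hcoeff0]
    ring
  set D' : Derivation K B B :=
    { toFun := D'f
      map_add' := hD'add
      map_smul' := fun k b => hD'smul k b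
      map_one_eq_zero' := by
        show D'f 1 = 0
        have h1 : Pb 1 = 1 := by
          have := halgA 1
          rwa [map_one, map_one, EP_one] at this
        show (Pb 1).coeff 1 = 0
        rw [h1, coeff_one]
        norm_num
      leibniz' := fun b c => by
        show D'f (b * c) = b • D'f c + c • D'f b
        rw [smul_eq_mul, smul_eq_mul, hD'leib] } with hD'
  have hD'apply : ∀ b, D' b = (Pb b).coeff 1 := fun b => rfl
  -- D' extends D
  have hext : ∀ a : A, D' (algebraMap A B a) = algebraMap A B (D a) := by
    intro a
    rw [hD'apply, halgA, EP_coeff, ecB_one, DX_C, aeval_C]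
  -- the derivative identity
  have hder : ∀ b, Pb (D'f b) = derivative (Pb b) := by
    intro b
    set p := (rep b).1 with hp
    set q := (rep b).2 with hq
    have hy : aeval u q ≠ 0 := hq0 b
    have hcoeff1 : b * aeval u (DX D q) + (Pb b).coeff 1 * aeval u q
        = aeval u (DX D p) := by
      have h := congrArg (fun P => P.coeff 1) (hPq b)
      rw [hc1, hcoeff0] at h
      rw [EP_coeff_zero, EP_coeff, ecB_one, EP_coeff, ecB_one] at h
      exact h
    have hrepD : aeval u (q * q) * D'f b = aeval u (q * DX D p - p * DX D q) := by
      rw [map_sub, map_mul, map_mul, map_mul]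
      have hx : aeval u p = aeval u q * b := (hb0 b).symm
      calc aeval u q * aeval u q * D'f b
          = aeval u q * (aeval u (DX D p) - b * aeval u (DX D q)) := by
            rw [← hcoeff1]
            show aeval u q * aeval u q * (Pb b).coeff 1 = _
            ring
        _ = aeval u q * aeval u (DX D p) - aeval u p * aeval u (DX D q) := by
            rw [hx]; ring
    have happly := hPb (D'f b) (q * DX D p - p * DX D q) (q * q)
      (by rw [map_mul]; exact mul_ne_zero hy hy) hrepD
    have hrhs : EP D u hlnd (q * DX D p - p * DX D q)
        = EP D u hlnd q * derivative (EP D u hlnd p)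
          - EP D u hlnd p * derivative (EP D u hlnd q) := by
      rw [EP_sub, EP_mul, EP_mul, EP_derivative, EP_derivative]
    have hq2 : EP D u hlnd (q * q) = EP D u hlnd q * EP D u hlnd q := EP_mul D u hlnd q q
    have hprod : derivative (Pb b) * EP D u hlnd q + Pb b * derivative (EP D u hlnd q)
        = derivative (EP D u hlnd p) := by
      rw [← derivative_mul, hPq b]
    have hEPqne : EP D u hlnd q ≠ 0 := EP_ne_zero D u hlnd hy
    have hcancel : EP D u hlnd q * EP D u hlnd q ≠ 0 := mul_ne_zero hEPqne hEPqne
    apply mul_right_cancel₀ hcancel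
    rw [← hq2, happly, hrhs, hq2]
    have hPbq : Pb b * EP D u hlnd q = EP D u hlnd p := hPq b
    calc EP D u hlnd q * derivative (EP D u hlnd p)
          - EP D u hlnd p * derivative (EP D u hlnd q)
        = EP D u hlnd q * (derivative (Pb b) * EP D u hlnd q
            + Pb b * derivative (EP D u hlnd q))
          - (Pb b * EP D u hlnd q) * derivative (EP D u hlnd q) := by rw [hprod, hPbq]
      _ = derivative (Pb b) * (EP D u hlnd q * EP D u hlnd q) := by ring
  -- iterates
  have hiter : ∀ (m : ℕ) (b : B), Pb ((D'f)^[m] b) = derivative^[m] (Pb b) := by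
    intro m
    induction m with
    | zero => intro b; rfl
    | succ m ih =>
      intro b
      rw [Function.iterate_succ_apply', Function.iterate_succ_apply', hder, ih]
  have hlnd' : IsLND D' := by
    intro b
    refine ⟨(Pb b).natDegree + 1, ?_⟩
    have hco : (⇑D')^[(Pb b).natDegree + 1] b = (D'f)^[(Pb b).natDegree + 1] b := rfl
    rw [hco, ← hcoeff0 ((D'f)^[(Pb b).natDegree + 1] b), hiter,
      iterate_derivative_eq_zero (Nat.lt_succ_self _), coeff_zero]
  -- uniqueness
  refine ⟨D', hext, hlnd', ?_⟩
  intro D'' hD''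
  have hu0 : u ≠ 0 := by
    intro h
    apply hv
    apply hinj
    rw [map_zero, ← hu, h, zero_pow hd.ne']
  have hDu : ∀ Δ : Derivation K B B,
      (∀ a : A, Δ (algebraMap A B a) = algebraMap A B (D a)) → Δ u = 0 := by
    intro Δ hΔ
    have h1 : Δ (u ^ d) = 0 := by
      rw [hu, hΔ, hker, map_zero]
    rw [Derivation.leibniz_pow, smul_eq_mul, nsmul_eq_mul] at h1
    rcases mul_eq_zero.mp h1 with h | h
    · exact absurd h (Nat.cast_ne_zero.mpr hd.ne')
    · exact (mul_eq_zero.mp h).resolve_left (pow_ne_zero _ hu0)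
  have hD'u : D' u = 0 := by
    have h1 : Pb u = EP D u hlnd X := by
      have := hone X
      rwa [aeval_X] at this
    rw [hD'apply, h1, EP_coeff, ecB_one, DX_X, map_zero]
  have hD''u : D'' u = 0 := hDu D'' hD''
  set Δ : Derivation K B B := D'' - D' with hΔdef
  have hΔa : ∀ a : A, Δ (algebraMap A B a) = 0 := by
    intro a
    show D'' (algebraMap A B a) - D' (algebraMap A B a) = 0
    rw [hD'' a, hext a, sub_self]
  have hΔu : Δ u = 0 := by
    show D'' u - D' u = 0
    rw [hD'u, hD''u, sub_self]
  have hΔR : ∀ p : Polynomial A, Δ (aeval u p) = 0 := by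
    intro p
    induction p using Polynomial.induction_on with
    | C a => rw [aeval_C]; exact hΔa a
    | add p q hp hq => rw [map_add, map_add, hp, hq, add_zero]
    | monomial n a _ =>
      rw [map_mul, aeval_C, map_pow, aeval_X, Derivation.leibniz, Derivation.leibniz_pow,
        hΔu, hΔa, smul_zero, smul_zero, smul_zero, smul_zero, add_zero]
  have hΔb : ∀ b : B, Δ b = 0 := by
    intro b
    have h1 : Δ (aeval u (rep b).2 * b) = 0 := by
      rw [hb0 b]; exact hΔR (rep b).1
    rw [Derivation.leibniz, hΔR (rep b).2, smul_zero, add_zero, smul_eq_mul] at h1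
    exact (mul_eq_zero.mp h1).resolve_left (hq0 b)
  ext b
  have h2 : D'' b - D' b = 0 := by
    have h3 := hΔb b
    rwa [hΔdef, Derivation.sub_apply] at h3
  exact sub_eq_zero.mp h2

/-- Lemma 1.7 (cyclic-LND): let `A` be a finitely generated normal domain over an
algebraically closed field `K` of characteristic `0`, `∂` a nonzero locally nilpotent
derivation on `A`, `v ∈ ker ∂` nonzero and `d > 0`.  Let `B` be the integral closure of
`A[u]` (with `u ^ d = v`) in its fraction field, i.e. `B` is a domain containing `A[u]`,
integral over `A`, integrally closed, and contained in `Frac(A[u])`.  Then `∂` extends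
uniquely to a derivation of `B`, and the extension is locally nilpotent. -/
theorem stmt14 {K A B : Type*} [Field K] [IsAlgClosed K] [CharZero K]
    [CommRing A] [IsDomain A] [Algebra K A]
    (hfg : Algebra.FiniteType K A) (hAnorm : IsIntegrallyClosed A)
    [CommRing B] [IsDomain B] [Algebra K B] [Algebra A B] [IsScalarTower K A B]
    (hinj : Function.Injective (algebraMap A B))
    (D : Derivation K A A) (hlnd : IsLND D) (hne : D ≠ 0)
    (v : A) (hv : v ≠ 0) (hker : D v = 0)
    (d : ℕ) (hd : 0 < d) (u : B) (hu : u ^ d = algebraMap A B v)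
    (hBint : ∀ b : B, IsIntegral A b)
    (hBnorm : IsIntegrallyClosed B)
    (hBfrac : ∀ b : B, ∃ x ∈ Algebra.adjoin A ({u} : Set B),
      ∃ y ∈ Algebra.adjoin A ({u} : Set B), y ≠ 0 ∧ y * b = x) :
    ∃ D' : Derivation K B B,
      (∀ a : A, D' (algebraMap A B a) = algebraMap A B (D a)) ∧
      IsLND D' ∧
      ∀ D'' : Derivation K B B,
        (∀ a : A, D'' (algebraMap A B a) = algebraMap A B (D a)) → D'' = D' := by
  exact stmt14' hAnorm hinj D hlnd v hv hker d hd u hu hBint hBnorm hBfrac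
end
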